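/- arXiv:2303.01861 — 5 statements merged into one kernel-verified Lean document; each statement's English description precedes it below -/
import Mathlib

section
/- There exists a constant C ≥ 1, depending only on d and C_f, such that for every t > 0 and every x ∈ ℝ^d one has C⁻¹ · exp(− d · (‖x‖∞ − m_t)_+² / σ_t²) ≤ p_t(x) ≤ C · exp(− (‖x‖∞ − m_t)_+² / (2σ_t²)). -/
open MeasureTheory Real

lemma aux_sq (M x y : ℝ) (hM : 0 < M) (hy : |y| ≤ 1) :
    (max (|x| - M) 0)^2 + M^2 * (max (-1) (min 1 (x/M)) - y)^2 ≤ (x - M*y)^2 := by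
  rw [abs_le] at hy
  rcases le_or_gt M x with h | h
  · have hx : |x| = x := abs_of_nonneg (le_trans hM.le h)
    have h1 : max (-1:ℝ) (min 1 (x/M)) = 1 := by
      rw [min_eq_left ((one_le_div hM).2 h)]; exact max_eq_right (by norm_num)
    rw [hx, h1, max_eq_left (sub_nonneg.2 h)]
    nlinarith [mul_nonneg (sub_nonneg.2 h) (mul_nonneg hM.le (sub_nonneg.2 hy.2))]
  · rcases le_or_gt x (-M) with h2 | h2
    · have hx : |x| = -x := abs_of_nonpos (by linarith)
      have h1 : max (-1:ℝ) (min 1 (x/M)) = -1 := by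
        have hx1 : x/M ≤ -1 := by rw [div_le_iff₀ hM]; linarith
        rw [min_eq_right (by linarith), max_eq_left hx1]
      rw [hx, h1, max_eq_left (by linarith)]
      nlinarith [mul_nonneg (by linarith : (0:ℝ) ≤ -x - M) (mul_nonneg hM.le (by linarith : (0:ℝ) ≤ 1 + y))]
    · have hx : |x| - M < 0 := by cases abs_cases x <;> linarith
      have h1 : max (-1:ℝ) (min 1 (x/M)) = x/M := by
        rw [min_eq_right (by rw [div_le_one hM]; linarith),
          max_eq_right (by rw [le_div_iff₀ hM]; linarith)]
      rw [h1, max_eq_right hx.le]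
      have h2 : M^2 * (x/M - y)^2 = (x - M*y)^2 := by field_simp
      simp [h2]

lemma aux_xc (M x : ℝ) (hM : 0 < M) :
    |x - M * (max (-1) (min 1 (x/M)))| ≤ max (|x| - M) 0 := by
  rcases le_or_gt M x with h | h
  · have hx : |x| = x := abs_of_nonneg (le_trans hM.le h)
    have h1 : max (-1:ℝ) (min 1 (x/M)) = 1 := by
      rw [min_eq_left ((one_le_div hM).2 h)]; exact max_eq_right (by norm_num)
    rw [hx, h1, max_eq_left (sub_nonneg.2 h), mul_one, abs_of_nonneg (by linarith)]
  · rcases le_or_gt x (-M) with h2 | h2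
    · have hx : |x| = -x := abs_of_nonpos (by linarith)
      have h1 : max (-1:ℝ) (min 1 (x/M)) = -1 := by
        have hx1 : x/M ≤ -1 := by rw [div_le_iff₀ hM]; linarith
        rw [min_eq_right (by linarith), max_eq_left hx1]
      rw [hx, h1, max_eq_left (by linarith), abs_of_nonpos (by linarith)]
      ring_nf
      linarith
    · have h1 : max (-1:ℝ) (min 1 (x/M)) = x/M := by
        rw [min_eq_right (by rw [div_le_one hM]; linarith),
          max_eq_right (by rw [le_div_iff₀ hM]; linarith)]
      rw [h1]
      have : x - M * (x/M) = 0 := by field_simp; ring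
      rw [this, abs_zero]
      exact le_max_right _ _

lemma aux_gauss (M S c : ℝ) (hM : 0 < M) (hS : 0 < S) :
    ∫ u : ℝ, Real.exp (-(M^2 * (c - u)^2) / (2*S^2)) = Real.sqrt (2*Real.pi) * S / M := by
  have h1 : ∀ u : ℝ, -(M^2 * (c - u)^2) / (2*S^2) = -(M^2/(2*S^2)) * (u - c)^2 := by
    intro u; field_simp; ring
  simp_rw [h1]
  rw [integral_sub_right_eq_self (fun u => Real.exp (-(M^2/(2*S^2)) * u^2)) c]
  rw [integral_gaussian]
  rw [show Real.pi / (M^2/(2*S^2)) = (2*Real.pi) * (S/M)^2 by field_simp]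
  rw [Real.sqrt_mul (by positivity), Real.sqrt_sq (by positivity)]
  ring

lemma aux_low (M S x : ℝ) (hM : 0 < M) (hM1 : M ≤ 1) (hS : 0 < S) (hS1 : S ≤ 1) :
    S * Real.exp (-1) * Real.exp (-(max (|x| - M) 0)^2 / S^2)
      ≤ ∫ u in Set.Icc (-1:ℝ) 1, Real.exp (-(x - M*u)^2 / (2*S^2)) := by
  set a := max (|x| - M) 0 with ha
  set c := max (-1) (min 1 (x/M)) with hcdef
  have hc1 : -1 ≤ c := le_max_left _ _
  have hc2 : c ≤ 1 := max_le (by norm_num) (min_le_left _ _)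
  set r := min M S / M with hrdef
  have hr0 : 0 < r := by positivity
  have hr1 : r ≤ 1 := by
    rw [hrdef, div_le_one hM]; exact min_le_left _ _
  have hrS : S ≤ r := by
    rw [hrdef, le_div_iff₀ hM]
    rcases le_total M S with h | h
    · rw [min_eq_left h]; nlinarith
    · rw [min_eq_right h]; nlinarith
  have hMr : M * r ≤ S := by
    rw [hrdef, mul_comm, div_mul_cancel₀ _ (ne_of_gt hM)]
    exact min_le_right _ _
  have ha0 : 0 ≤ a := le_max_right _ _
  set lo := c - r*(c+1)/2 with hlo
  set hi := c + r*(1-c)/2 with hhi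
  have hord : lo ≤ hi := by rw [hlo, hhi]; nlinarith
  have hsub : Set.Icc lo hi ⊆ Set.Icc (-1:ℝ) 1 :=
    Set.Icc_subset_Icc (by rw [hlo]; nlinarith) (by rw [hhi]; nlinarith)
  have hlen : hi - lo = r := by rw [hlo, hhi]; ring
  have hpt : ∀ u ∈ Set.Icc lo hi,
      Real.exp (-1) * Real.exp (-a^2 / S^2) ≤ Real.exp (-(x - M*u)^2 / (2*S^2)) := by
    intro u hu
    rw [← Real.exp_add]
    apply Real.exp_le_exp.2
    have hcu : |c - u| ≤ r := by
      rw [abs_le]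
      rw [hlo, hhi] at hu; rcases hu with ⟨h1, h2⟩
      constructor <;> nlinarith
    have hxc : |x - M*c| ≤ a := by rw [hcdef, ha]; exact aux_xc M x hM
    have hxu : |x - M*u| ≤ a + S := by
      calc |x - M*u| = |(x - M*c) + M*(c - u)| := by
            rw [show x - M*c + M*(c-u) = x - M*u by ring]
        _ ≤ |x - M*c| + |M*(c-u)| := abs_add_le _ _
        _ ≤ a + M*r := by
            rw [abs_mul, abs_of_pos hM]
            exact add_le_add hxc (by nlinarith)
        _ ≤ a + S := by linarith
    have hsq : (x - M*u)^2 ≤ 2*a^2 + 2*S^2 := by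
      nlinarith [abs_nonneg (x - M*u), sq_abs (x - M*u), sq_nonneg (a - S)]
    have key : (x - M*u)^2 / (2*S^2) ≤ a^2/S^2 + 1 := by
      rw [div_le_iff₀ (by positivity)]
      rw [show (a^2/S^2 + 1)*(2*S^2) = 2*a^2 + 2*S^2 by field_simp]
      exact hsq
    rw [neg_div, neg_div]
    linarith
  have hcont : Continuous (fun u : ℝ => Real.exp (-(x - M*u)^2 / (2*S^2))) := by
    fun_prop
  have hint : IntegrableOn (fun u : ℝ => Real.exp (-(x - M*u)^2 / (2*S^2)))
      (Set.Icc (-1:ℝ) 1) := hcont.integrableOn_Icc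
  have h3 : (Real.exp (-1) * Real.exp (-a^2/S^2)) * (volume (Set.Icc lo hi)).toReal
      ≤ ∫ u in Set.Icc lo hi, Real.exp (-(x - M*u)^2 / (2*S^2)) := by
    apply setIntegral_ge_of_const_le_real measurableSet_Icc
    · exact (measure_lt_top_of_subset hsub (by simp)).ne
    · exact hpt
    · exact hint.mono_set hsub
  have hvol : (volume (Set.Icc lo hi)).toReal = r := by
    rw [Real.volume_Icc, hlen, ENNReal.toReal_ofReal hr0.le]
  have h4 : ∫ u in Set.Icc lo hi, Real.exp (-(x - M*u)^2 / (2*S^2))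
      ≤ ∫ u in Set.Icc (-1:ℝ) 1, Real.exp (-(x - M*u)^2 / (2*S^2)) := by
    apply setIntegral_mono_set hint
    · exact Filter.Eventually.of_forall fun u => (Real.exp_pos _).le
    · exact HasSubset.Subset.eventuallyLE hsub
  rw [hvol] at h3
  nlinarith [Real.exp_pos (-1), Real.exp_pos (-a^2/S^2),
    mul_pos (Real.exp_pos (-1)) (Real.exp_pos (-a^2/S^2))]

set_option maxHeartbeats 1000000 in
lemma aux_upper (d : ℕ) (hd : 1 ≤ d) (M S Cf : ℝ) (hM0 : 0 < M) (hM1 : M < 1)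
    (hS0 : 0 < S) (hS2 : S^2 = 1 - M^2) (hCf : 1 ≤ Cf)
    (p0 : (Fin d → ℝ) → ℝ)
    (hp0nn : ∀ x, 0 ≤ p0 x)
    (hp0supp : ∀ x : Fin d → ℝ, ¬ (∀ i, |x i| ≤ 1) → p0 x = 0)
    (hp0bd : ∀ x : Fin d → ℝ, (∀ i, |x i| ≤ 1) → p0 x ≤ Cf)
    (x : Fin d → ℝ) :
    (∫ y : Fin d → ℝ, p0 y * ((2*Real.pi*S^2)^(-(d:ℝ)/2) *
      Real.exp (-(∑ i, (x i - M*y i)^2)/(2*S^2))))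
      ≤ Cf * 2^d * Real.exp (-(max (‖x‖ - M) 0)^2/(2*S^2)) := by
  haveI : Nonempty (Fin d) := ⟨⟨0, hd⟩⟩
  set A := max (‖x‖ - M) 0 with hAdef
  obtain ⟨i₀, hi₀⟩ := Finite.exists_max (fun i => |x i|)
  have hnx : ‖x‖ ≤ |x i₀| := by
    apply (pi_norm_le_iff_of_nonneg (abs_nonneg _)).2
    intro i; rw [Real.norm_eq_abs]; exact hi₀ i
  set a : Fin d → ℝ := fun i => max (|x i| - M) 0 with hadef
  have hA : A ≤ a i₀ := max_le_max (by linarith) le_rfl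
  have hA0 : 0 ≤ A := le_max_right _ _
  have hA2 : A^2 ≤ (a i₀)^2 := by nlinarith
  set c : Fin d → ℝ := fun i => max (-1) (min 1 (x i / M)) with hcdef
  have h2S2 : (0:ℝ) < 2*S^2 := by positivity
  have hbase : (0:ℝ) < 2*Real.pi*S^2 := by positivity
  have hS1 : S ≤ 1 := by nlinarith
  rcases le_total ((1:ℝ)/2) (M^2) with hMbig | hMsmall
  · -- route 1 : Gaussian domination
    set pref1 : ℝ := (2*Real.pi*S^2)^(-(1:ℝ)/2 : ℝ) with hpref1def
    have hpref1pos : 0 < pref1 := Real.rpow_pos_of_pos hbase _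
    have hP : ((2*Real.pi*S^2):ℝ)^(-(d:ℝ)/2 : ℝ) = pref1^d := by
      rw [hpref1def, ← Real.rpow_natCast ((2*Real.pi*S^2)^(-(1:ℝ)/2 : ℝ)) d,
        ← Real.rpow_mul hbase.le]
      congr 1; ring
    have hb : (0:ℝ) < M^2/(2*S^2) := by positivity
    have hpt : ∀ y : Fin d → ℝ,
        p0 y * ((2*Real.pi*S^2)^(-(d:ℝ)/2) *
          Real.exp (-(∑ i, (x i - M*y i)^2)/(2*S^2)))
        ≤ Cf * Real.exp (-(a i₀)^2/(2*S^2)) *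
          ∏ i, (pref1 * Real.exp (-(M^2*(c i - y i)^2)/(2*S^2))) := by
      intro y
      by_cases hy : ∀ i, |y i| ≤ 1
      · have hsum : (a i₀)^2 + ∑ i, M^2*(c i - y i)^2 ≤ ∑ i, (x i - M*y i)^2 := by
          have h1 : ∑ i, ((a i)^2 + M^2*(c i - y i)^2) ≤ ∑ i, (x i - M*y i)^2 :=
            Finset.sum_le_sum fun i _ => aux_sq M (x i) (y i) hM0 (hy i)
          rw [Finset.sum_add_distrib] at h1
          have h2 : (a i₀)^2 ≤ ∑ i, (a i)^2 :=
            Finset.single_le_sum (f := fun i => (a i)^2) (fun i _ => sq_nonneg _)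
              (Finset.mem_univ i₀)
          linarith
        have hprod : ∏ i, (pref1 * Real.exp (-(M^2*(c i - y i)^2)/(2*S^2)))
            = pref1^d * Real.exp (-(∑ i, M^2*(c i - y i)^2)/(2*S^2)) := by
          rw [Finset.prod_mul_distrib, Finset.prod_const, Finset.card_univ, Fintype.card_fin]
          congr 1
          rw [← Real.exp_sum]
          congr 1
          rw [← Finset.sum_div, Finset.sum_neg_distrib]
        rw [hprod, hP]
        calc p0 y * (pref1^d * Real.exp (-(∑ i, (x i - M*y i)^2)/(2*S^2)))
            ≤ Cf * (pref1^d *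
              Real.exp (-((a i₀)^2 + ∑ i, M^2*(c i - y i)^2)/(2*S^2))) := by
              apply mul_le_mul (hp0bd y hy) ?_ (by positivity) (by linarith)
              apply mul_le_mul_of_nonneg_left ?_ (by positivity)
              apply Real.exp_le_exp.2
              gcongr
          _ = Cf * Real.exp (-(a i₀)^2/(2*S^2)) *
              (pref1^d * Real.exp (-(∑ i, M^2*(c i - y i)^2)/(2*S^2))) := by
              rw [show -((a i₀)^2 + ∑ i, M^2*(c i - y i)^2)/(2*S^2)
                = -(a i₀)^2/(2*S^2) + -(∑ i, M^2*(c i - y i)^2)/(2*S^2) by ring,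
                Real.exp_add]
              ring
      · rw [hp0supp y hy, zero_mul]
        positivity
    have h1dint : ∀ (ci : ℝ),
        Integrable (fun u : ℝ => pref1 * Real.exp (-(M^2*(ci - u)^2)/(2*S^2))) := by
      intro ci
      apply Integrable.const_mul
      have heq : (fun u:ℝ => Real.exp (-(M^2*(ci-u)^2)/(2*S^2)))
          = (fun u:ℝ => Real.exp (-(M^2/(2*S^2)) * u^2)) ∘ (fun u => u - ci) := by
        funext u; simp only [Function.comp_apply]; congr 1; field_simp; ring
      rw [heq]
      exact (integrable_exp_neg_mul_sq hb).comp_sub_right ci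
    have hGint : Integrable (fun y : Fin d → ℝ =>
        ∏ i, (pref1 * Real.exp (-(M^2*(c i - y i)^2)/(2*S^2)))) :=
      Integrable.fintype_prod (fun i => h1dint (c i))
    have h1dval : ∀ i, (∫ u : ℝ, pref1 * Real.exp (-(M^2*(c i - u)^2)/(2*S^2))) = 1/M := by
      intro i
      rw [MeasureTheory.integral_const_mul, aux_gauss M S (c i) hM0 hS0]
      have hsqrt : Real.sqrt (2*Real.pi*S^2) = Real.sqrt (2*Real.pi) * S := by
        rw [Real.sqrt_mul (by positivity), Real.sqrt_sq hS0.le]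
      have hpref1 : pref1 = (Real.sqrt (2*Real.pi) * S)⁻¹ := by
        rw [hpref1def, neg_div, Real.rpow_neg hbase.le, ← Real.sqrt_eq_rpow, hsqrt]
      rw [hpref1]
      have h2pi : (0:ℝ) < Real.sqrt (2*Real.pi) := Real.sqrt_pos.2 (by positivity)
      field_simp
    have hGval : (∫ y : Fin d → ℝ, ∏ i, (pref1 * Real.exp (-(M^2*(c i - y i)^2)/(2*S^2))))
        = (1/M)^d := by
      rw [MeasureTheory.volume_pi, MeasureTheory.integral_fintype_prod_eq_prod
        (f := fun i u => pref1 * Real.exp (-(M^2*(c i - u)^2)/(2*S^2)))]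
      rw [Finset.prod_congr rfl (fun i _ => h1dval i), Finset.prod_const,
        Finset.card_univ, Fintype.card_fin]
    have hmono : (∫ y : Fin d → ℝ, p0 y * ((2*Real.pi*S^2)^(-(d:ℝ)/2) *
          Real.exp (-(∑ i, (x i - M*y i)^2)/(2*S^2))))
        ≤ ∫ y : Fin d → ℝ, Cf * Real.exp (-(a i₀)^2/(2*S^2)) *
          ∏ i, (pref1 * Real.exp (-(M^2*(c i - y i)^2)/(2*S^2))) := by
      apply integral_mono_of_nonneg
      · apply Filter.Eventually.of_forall
        intro y
        have := hp0nn y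
        have := (Real.exp_pos (-(∑ i, (x i - M*y i)^2)/(2*S^2))).le
        have hPpos : (0:ℝ) < (2*Real.pi*S^2)^(-(d:ℝ)/2 : ℝ) := Real.rpow_pos_of_pos hbase _
        positivity
      · exact hGint.const_mul _
      · exact Filter.Eventually.of_forall hpt
    rw [MeasureTheory.integral_const_mul, hGval] at hmono
    have hMhalf : (1:ℝ)/2 ≤ M := by nlinarith
    have h2d : ((1:ℝ)/M)^d ≤ 2^d := by
      apply pow_le_pow_left₀ (by positivity)
      rw [div_le_iff₀ hM0]; linarith
    calc (∫ y : Fin d → ℝ, p0 y * ((2*Real.pi*S^2)^(-(d:ℝ)/2) *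
          Real.exp (-(∑ i, (x i - M*y i)^2)/(2*S^2))))
        ≤ Cf * Real.exp (-(a i₀)^2/(2*S^2)) * (1/M)^d := hmono
      _ ≤ Cf * Real.exp (-A^2/(2*S^2)) * 2^d := by
          apply mul_le_mul ?_ h2d (by positivity) (by positivity)
          apply mul_le_mul_of_nonneg_left ?_ (by linarith)
          apply Real.exp_le_exp.2
          gcongr
      _ = Cf * 2^d * Real.exp (-A^2/(2*S^2)) := by ring
  · -- route 2 : big variance, use volume of cube
    have hS2big : (1:ℝ)/2 ≤ S^2 := by rw [hS2]; linarith
    set Cube := (Set.univ : Set (Fin d)).pi (fun _ => Set.Icc (-1:ℝ) 1) with hCubedef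
    have hCubem : MeasurableSet Cube := MeasurableSet.univ_pi fun i => measurableSet_Icc
    have hCubevol : volume Cube = (ENNReal.ofReal 2)^d := by
      rw [hCubedef, volume_pi_pi]
      simp [Real.volume_Icc]
      norm_num
    have hmem : ∀ y : Fin d → ℝ, y ∈ Cube ↔ ∀ i, |y i| ≤ 1 := by
      intro y
      simp only [hCubedef, Set.mem_univ_pi, Set.mem_Icc, abs_le]
    have hPle1 : ((2*Real.pi*S^2):ℝ)^(-(d:ℝ)/2 : ℝ) ≤ 1 := by
      apply Real.rpow_le_one_of_one_le_of_nonpos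
      · have h1 : 2*Real.pi*(1/2) ≤ 2*Real.pi*S^2 :=
          mul_le_mul_of_nonneg_left hS2big (by positivity)
        linarith [Real.pi_gt_three]
      · have : (0:ℝ) ≤ (d:ℝ) := Nat.cast_nonneg d
        linarith [div_nonneg this (by norm_num : (0:ℝ) ≤ 2)]
    have hpt2 : ∀ y : Fin d → ℝ,
        p0 y * ((2*Real.pi*S^2)^(-(d:ℝ)/2) *
          Real.exp (-(∑ i, (x i - M*y i)^2)/(2*S^2)))
        ≤ Cube.indicator (fun _ => Cf * Real.exp (-A^2/(2*S^2))) y := by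
      intro y
      by_cases hy : ∀ i, |y i| ≤ 1
      · rw [Set.indicator_of_mem ((hmem y).2 hy)]
        have hE : Real.exp (-(∑ i, (x i - M*y i)^2)/(2*S^2))
            ≤ Real.exp (-A^2/(2*S^2)) := by
          apply Real.exp_le_exp.2
          gcongr
          calc A^2 ≤ (a i₀)^2 := hA2
            _ ≤ (x i₀ - M*y i₀)^2 := by
                nlinarith [aux_sq M (x i₀) (y i₀) hM0 (hy i₀),
                  mul_nonneg (sq_nonneg M) (sq_nonneg (max (-1) (min 1 (x i₀ / M)) - y i₀))]
            _ ≤ ∑ i, (x i - M*y i)^2 :=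
                Finset.single_le_sum (f := fun i => (x i - M*y i)^2)
                  (fun i _ => sq_nonneg _) (Finset.mem_univ i₀)
        calc p0 y * ((2*Real.pi*S^2)^(-(d:ℝ)/2) *
              Real.exp (-(∑ i, (x i - M*y i)^2)/(2*S^2)))
            ≤ Cf * (1 * Real.exp (-A^2/(2*S^2))) := by
              apply mul_le_mul (hp0bd y hy) ?_ (by positivity) (by linarith)
              exact mul_le_mul hPle1 hE (Real.exp_pos _).le zero_le_one
          _ = Cf * Real.exp (-A^2/(2*S^2)) := by ring
      · rw [hp0supp y hy, zero_mul, Set.indicator_of_notMem (fun h => hy ((hmem y).1 h))]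
    have hIndInt : Integrable (Cube.indicator
        (fun _ : Fin d → ℝ => Cf * Real.exp (-A^2/(2*S^2)))) := by
      rw [integrable_indicator_iff hCubem]
      refine integrableOn_const (lt_top_iff_ne_top.1 ?_)
      rw [hCubevol]
      exact ENNReal.pow_lt_top ENNReal.ofReal_lt_top
    have hmono : (∫ y : Fin d → ℝ, p0 y * ((2*Real.pi*S^2)^(-(d:ℝ)/2) *
          Real.exp (-(∑ i, (x i - M*y i)^2)/(2*S^2))))
        ≤ ∫ y : Fin d → ℝ, Cube.indicator (fun _ => Cf * Real.exp (-A^2/(2*S^2))) y := by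
      apply integral_mono_of_nonneg
      · apply Filter.Eventually.of_forall
        intro y
        have := hp0nn y
        have hPpos : (0:ℝ) < (2*Real.pi*S^2)^(-(d:ℝ)/2 : ℝ) := Real.rpow_pos_of_pos hbase _
        have := (Real.exp_pos (-(∑ i, (x i - M*y i)^2)/(2*S^2))).le
        positivity
      · exact hIndInt
      · exact Filter.Eventually.of_forall hpt2
    rw [integral_indicator_const _ hCubem, measureReal_def, hCubevol] at hmono
    calc (∫ y : Fin d → ℝ, p0 y * ((2*Real.pi*S^2)^(-(d:ℝ)/2) *
          Real.exp (-(∑ i, (x i - M*y i)^2)/(2*S^2))))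
        ≤ (((ENNReal.ofReal 2)^d).toReal) • (Cf * Real.exp (-A^2/(2*S^2))) := hmono
      _ = Cf * 2^d * Real.exp (-A^2/(2*S^2)) := by
          rw [ENNReal.toReal_pow, ENNReal.toReal_ofReal (by norm_num : (0:ℝ) ≤ 2),
            smul_eq_mul]
          ring

set_option maxHeartbeats 1000000 in
lemma aux_lower (d : ℕ) (hd : 1 ≤ d) (M S Cf : ℝ) (hM0 : 0 < M) (hM1 : M < 1)
    (hS0 : 0 < S) (hS2 : S^2 = 1 - M^2) (hCf : 1 ≤ Cf)
    (p0 : (Fin d → ℝ) → ℝ) (hp0meas : Measurable p0)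
    (hp0nn : ∀ x, 0 ≤ p0 x)
    (hp0supp : ∀ x : Fin d → ℝ, ¬ (∀ i, |x i| ≤ 1) → p0 x = 0)
    (hp0lb : ∀ x : Fin d → ℝ, (∀ i, |x i| ≤ 1) → Cf⁻¹ ≤ p0 x)
    (hp0ub : ∀ x : Fin d → ℝ, (∀ i, |x i| ≤ 1) → p0 x ≤ Cf)
    (x : Fin d → ℝ) :
    Cf⁻¹ * (((Real.sqrt (2*Real.pi))⁻¹ * Real.exp (-1)) *
        Real.exp (-(max (‖x‖ - M) 0)^2/S^2))^d
      ≤ ∫ y : Fin d → ℝ, p0 y * ((2*Real.pi*S^2)^(-(d:ℝ)/2) *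
          Real.exp (-(∑ i, (x i - M*y i)^2)/(2*S^2))) := by
  haveI : Nonempty (Fin d) := ⟨⟨0, hd⟩⟩
  set A := max (‖x‖ - M) 0 with hAdef
  have hA0 : 0 ≤ A := le_max_right _ _
  set a : Fin d → ℝ := fun i => max (|x i| - M) 0 with hadef
  have hai : ∀ i, a i ≤ A := by
    intro i
    apply max_le_max ?_ le_rfl
    have := norm_le_pi_norm x i
    rw [Real.norm_eq_abs] at this
    linarith
  have hai2 : ∀ i, (a i)^2 ≤ A^2 := by
    intro i
    have h0 : 0 ≤ a i := le_max_right _ _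
    nlinarith [hai i]
  have h2S2 : (0:ℝ) < 2*S^2 := by positivity
  have hbase : (0:ℝ) < 2*Real.pi*S^2 := by positivity
  have hS1 : S ≤ 1 := by nlinarith
  set pref1 : ℝ := (2*Real.pi*S^2)^(-(1:ℝ)/2 : ℝ) with hpref1def
  have hpref1pos : 0 < pref1 := Real.rpow_pos_of_pos hbase _
  have h2pi : (0:ℝ) < Real.sqrt (2*Real.pi) := Real.sqrt_pos.2 (by positivity)
  have hpref1 : pref1 = (Real.sqrt (2*Real.pi) * S)⁻¹ := by
    rw [hpref1def, neg_div, Real.rpow_neg hbase.le, ← Real.sqrt_eq_rpow,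
      Real.sqrt_mul (by positivity), Real.sqrt_sq hS0.le]
  have hP : ((2*Real.pi*S^2):ℝ)^(-(d:ℝ)/2 : ℝ) = pref1^d := by
    rw [hpref1def, ← Real.rpow_natCast ((2*Real.pi*S^2)^(-(1:ℝ)/2 : ℝ)) d,
      ← Real.rpow_mul hbase.le]
    congr 1; ring
  have hPpos : (0:ℝ) < (2*Real.pi*S^2)^(-(d:ℝ)/2 : ℝ) := Real.rpow_pos_of_pos hbase _
  set h : Fin d → ℝ → ℝ := fun i u => (Set.Icc (-1:ℝ) 1).indicator
    (fun v => pref1 * Real.exp (-(x i - M*v)^2/(2*S^2))) u with hhdef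
  have hhnn : ∀ i u, 0 ≤ h i u := by
    intro i u
    apply Set.indicator_nonneg
    intro v _
    positivity
  -- pointwise bound
  have hgle : ∀ y : Fin d → ℝ, Cf⁻¹ * ∏ i, h i (y i)
      ≤ p0 y * ((2*Real.pi*S^2)^(-(d:ℝ)/2) *
          Real.exp (-(∑ i, (x i - M*y i)^2)/(2*S^2))) := by
    intro y
    by_cases hy : ∀ i, |y i| ≤ 1
    · have hind : ∀ i, h i (y i) = pref1 * Real.exp (-(x i - M*y i)^2/(2*S^2)) := by
        intro i
        rw [hhdef]
        exact Set.indicator_of_mem (Set.mem_Icc.2 (abs_le.1 (hy i))) _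
      have hprod : ∏ i, h i (y i)
          = (2*Real.pi*S^2)^(-(d:ℝ)/2 : ℝ) *
            Real.exp (-(∑ i, (x i - M*y i)^2)/(2*S^2)) := by
        rw [Finset.prod_congr rfl (fun i _ => hind i), Finset.prod_mul_distrib,
          Finset.prod_const, Finset.card_univ, Fintype.card_fin, hP]
        congr 1
        rw [← Real.exp_sum]
        congr 1
        rw [← Finset.sum_div, Finset.sum_neg_distrib]
      rw [hprod]
      apply mul_le_mul_of_nonneg_right (hp0lb y hy)
      positivity
    · have hz : ∃ i, ¬ |y i| ≤ 1 := not_forall.1 hy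
      obtain ⟨i, hi⟩ := hz
      have : h i (y i) = 0 := by
        rw [hhdef]
        exact Set.indicator_of_notMem (fun hmem => hi (abs_le.2 (Set.mem_Icc.1 hmem))) _
      rw [Finset.prod_eq_zero (Finset.mem_univ i) this, mul_zero]
      have := hp0nn y
      have := (Real.exp_pos (-(∑ i, (x i - M*y i)^2)/(2*S^2))).le
      positivity
  -- integrability of the upper function (the true integrand)
  set Cube := (Set.univ : Set (Fin d)).pi (fun _ => Set.Icc (-1:ℝ) 1) with hCubedef
  have hCubem : MeasurableSet Cube := MeasurableSet.univ_pi fun i => measurableSet_Icc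
  have hCubevol : volume Cube = (ENNReal.ofReal 2)^d := by
    rw [hCubedef, volume_pi_pi]
    simp [Real.volume_Icc]
    norm_num
  have hmem : ∀ y : Fin d → ℝ, y ∈ Cube ↔ ∀ i, |y i| ≤ 1 := by
    intro y
    simp only [hCubedef, Set.mem_univ_pi, Set.mem_Icc, abs_le]
  have hfmeas : Measurable (fun y : Fin d → ℝ => p0 y * ((2*Real.pi*S^2)^(-(d:ℝ)/2) *
      Real.exp (-(∑ i, (x i - M*y i)^2)/(2*S^2)))) := by
    apply hp0meas.mul
    apply Measurable.const_mul
    apply Real.measurable_exp.comp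
    apply Measurable.div_const
    apply Measurable.neg
    exact Finset.measurable_sum _ (fun i _ => by fun_prop)
  have hdomint : Integrable (Cube.indicator
      (fun _ : Fin d → ℝ => Cf * (2*Real.pi*S^2)^(-(d:ℝ)/2 : ℝ))) := by
    rw [integrable_indicator_iff hCubem]
    refine integrableOn_const (lt_top_iff_ne_top.1 ?_)
    rw [hCubevol]
    exact ENNReal.pow_lt_top ENNReal.ofReal_lt_top
  have hfint : Integrable (fun y : Fin d → ℝ => p0 y * ((2*Real.pi*S^2)^(-(d:ℝ)/2) *
      Real.exp (-(∑ i, (x i - M*y i)^2)/(2*S^2)))) := by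
    apply Integrable.mono' hdomint hfmeas.aestronglyMeasurable
    apply Filter.Eventually.of_forall
    intro y
    have hnn : 0 ≤ p0 y * ((2*Real.pi*S^2)^(-(d:ℝ)/2 : ℝ) *
        Real.exp (-(∑ i, (x i - M*y i)^2)/(2*S^2))) := by
      have := hp0nn y
      have := (Real.exp_pos (-(∑ i, (x i - M*y i)^2)/(2*S^2))).le
      positivity
    rw [Real.norm_eq_abs, abs_of_nonneg hnn]
    by_cases hy : ∀ i, |y i| ≤ 1
    · rw [Set.indicator_of_mem ((hmem y).2 hy)]
      calc p0 y * ((2*Real.pi*S^2)^(-(d:ℝ)/2 : ℝ) *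
            Real.exp (-(∑ i, (x i - M*y i)^2)/(2*S^2)))
          ≤ Cf * ((2*Real.pi*S^2)^(-(d:ℝ)/2 : ℝ) * 1) := by
            apply mul_le_mul (hp0ub y hy) ?_ ?_ (by linarith)
            · apply mul_le_mul_of_nonneg_left ?_ hPpos.le
              apply Real.exp_le_one_iff.2
              rw [neg_div]
              have : 0 ≤ (∑ i, (x i - M*y i)^2) / (2*S^2) := by positivity
              linarith
            · have := (Real.exp_pos (-(∑ i, (x i - M*y i)^2)/(2*S^2))).le
              positivity
        _ = Cf * (2*Real.pi*S^2)^(-(d:ℝ)/2 : ℝ) := by ring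
    · rw [hp0supp y hy, zero_mul, Set.indicator_of_notMem (fun hmem' => hy ((hmem y).1 hmem'))]
  -- monotonicity
  have hmono : (∫ y : Fin d → ℝ, Cf⁻¹ * ∏ i, h i (y i))
      ≤ ∫ y : Fin d → ℝ, p0 y * ((2*Real.pi*S^2)^(-(d:ℝ)/2) *
          Real.exp (-(∑ i, (x i - M*y i)^2)/(2*S^2))) := by
    apply integral_mono_of_nonneg
    · apply Filter.Eventually.of_forall
      intro y
      have : 0 ≤ ∏ i, h i (y i) := Finset.prod_nonneg (fun i _ => hhnn i (y i))
      positivity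
    · exact hfint
    · exact Filter.Eventually.of_forall hgle
  -- compute/estimate the lower integral
  have hgval : (∫ y : Fin d → ℝ, Cf⁻¹ * ∏ i, h i (y i))
      = Cf⁻¹ * ∏ i, ∫ u : ℝ, h i u := by
    rw [MeasureTheory.integral_const_mul]
    congr 1
    exact MeasureTheory.integral_fintype_prod_eq_prod (f := h)
  have hhval : ∀ i, ((Real.sqrt (2*Real.pi))⁻¹ * Real.exp (-1)) *
      Real.exp (-A^2/S^2) ≤ ∫ u : ℝ, h i u := by
    intro i
    rw [hhdef]
    rw [MeasureTheory.integral_indicator measurableSet_Icc,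
      MeasureTheory.integral_const_mul]
    have hlow := aux_low M S (x i) hM0 hM1.le hS0 hS1
    have h1 : pref1 * (S * Real.exp (-1) * Real.exp (-(a i)^2/S^2))
        ≤ pref1 * ∫ u in Set.Icc (-1:ℝ) 1, Real.exp (-(x i - M*u)^2/(2*S^2)) := by
      apply mul_le_mul_of_nonneg_left ?_ hpref1pos.le
      exact hlow
    have h2 : pref1 * (S * Real.exp (-1) * Real.exp (-(a i)^2/S^2))
        = (Real.sqrt (2*Real.pi))⁻¹ * Real.exp (-1) * Real.exp (-(a i)^2/S^2) := by
      rw [hpref1, mul_inv]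
      field_simp
    have h3 : ((Real.sqrt (2*Real.pi))⁻¹ * Real.exp (-1)) * Real.exp (-A^2/S^2)
        ≤ (Real.sqrt (2*Real.pi))⁻¹ * Real.exp (-1) * Real.exp (-(a i)^2/S^2) := by
      apply mul_le_mul_of_nonneg_left ?_ (by positivity)
      apply Real.exp_le_exp.2
      gcongr
      exact hai i
    calc ((Real.sqrt (2*Real.pi))⁻¹ * Real.exp (-1)) * Real.exp (-A^2/S^2)
        ≤ (Real.sqrt (2*Real.pi))⁻¹ * Real.exp (-1) * Real.exp (-(a i)^2/S^2) := h3
      _ = pref1 * (S * Real.exp (-1) * Real.exp (-(a i)^2/S^2)) := h2.symm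
      _ ≤ _ := h1
  have hprodlow : (((Real.sqrt (2*Real.pi))⁻¹ * Real.exp (-1)) *
      Real.exp (-A^2/S^2))^d ≤ ∏ i, ∫ u : ℝ, h i u := by
    calc (((Real.sqrt (2*Real.pi))⁻¹ * Real.exp (-1)) * Real.exp (-A^2/S^2))^d
        = ∏ _i : Fin d, (((Real.sqrt (2*Real.pi))⁻¹ * Real.exp (-1)) *
          Real.exp (-A^2/S^2)) := by
          rw [Finset.prod_const, Finset.card_univ, Fintype.card_fin]
      _ ≤ ∏ i, ∫ u : ℝ, h i u := by
          apply Finset.prod_le_prod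
          · intro i _; positivity
          · intro i _; exact hhval i
  calc Cf⁻¹ * (((Real.sqrt (2*Real.pi))⁻¹ * Real.exp (-1)) * Real.exp (-A^2/S^2))^d
      ≤ Cf⁻¹ * ∏ i, ∫ u : ℝ, h i u := by
        apply mul_le_mul_of_nonneg_left hprodlow (by positivity)
    _ = ∫ y : Fin d → ℝ, Cf⁻¹ * ∏ i, h i (y i) := hgval.symm
    _ ≤ _ := hmono

/-- Upper and lower Gaussian-type bounds on the diffused density `p_t`:
there exists `C ≥ 1` (depending only on `d` and `C_f`) with
`C⁻¹ exp(−d (‖x‖∞ − m_t)₊² / σ_t²) ≤ p_t(x) ≤ C exp(−(‖x‖∞ − m_t)₊² / (2σ_t²))`. -/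
theorem statement0
    (d : ℕ) (hd : 1 ≤ d)
    (βlo βhi : ℝ) (hβlo : 0 < βlo) (hβhi : βlo ≤ βhi)
    (β : ℝ → ℝ) (hβc : ContinuousOn β (Set.Ici 0))
    (hβb : ∀ t : ℝ, 0 ≤ t → βlo ≤ β t ∧ β t ≤ βhi)
    (m σ : ℝ → ℝ)
    (hm : ∀ t : ℝ, m t = Real.exp (-(∫ s in (0:ℝ)..t, β s)))
    (hσ : ∀ t : ℝ, σ t = Real.sqrt (1 - (m t) ^ 2))
    (Cf : ℝ) (hCf : 1 ≤ Cf)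
    (p0 : (Fin d → ℝ) → ℝ) (hp0meas : Measurable p0)
    (hp0nn : ∀ x, 0 ≤ p0 x) (hp0int : (∫ x, p0 x) = 1)
    (hp0supp : ∀ x : Fin d → ℝ, ¬ (∀ i, |x i| ≤ 1) → p0 x = 0)
    (hp0bd : ∀ x : Fin d → ℝ, (∀ i, |x i| ≤ 1) → Cf⁻¹ ≤ p0 x ∧ p0 x ≤ Cf)
    (p : ℝ → (Fin d → ℝ) → ℝ)
    (hp : ∀ t : ℝ, ∀ x : Fin d → ℝ, p t x =
      ∫ y : Fin d → ℝ, p0 y * ((2 * Real.pi * (σ t) ^ 2) ^ (-(d : ℝ) / 2) *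
        Real.exp (-(∑ i, (x i - m t * y i) ^ 2) / (2 * (σ t) ^ 2)))) :
    ∃ C : ℝ, 1 ≤ C ∧ ∀ t : ℝ, 0 < t → ∀ x : Fin d → ℝ,
      C⁻¹ * Real.exp (-(d : ℝ) * (max (‖x‖ - m t) 0) ^ 2 / (σ t) ^ 2) ≤ p t x ∧
      p t x ≤ C * Real.exp (-(max (‖x‖ - m t) 0) ^ 2 / (2 * (σ t) ^ 2)) := by
  have he1 : (2:ℝ) ≤ Real.exp 1 := by
    have := Real.add_one_le_exp 1
    linarith
  have h3e : (2:ℝ) ≤ 3 * Real.exp 1 := by nlinarith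
  have h3e1 : (1:ℝ) ≤ 3 * Real.exp 1 := by linarith
  refine ⟨Cf * (3 * Real.exp 1)^d, ?_, ?_⟩
  · calc (1:ℝ) = 1 * 1 := by norm_num
      _ ≤ Cf * (3 * Real.exp 1)^d := by
          apply mul_le_mul hCf (one_le_pow₀ h3e1) (by norm_num) (by linarith)
  · intro t ht x
    -- facts about m t and σ t
    have hI : 0 < ∫ s in (0:ℝ)..t, β s := by
      have hcont : ContinuousOn β (Set.uIcc 0 t) := by
        apply hβc.mono
        rw [Set.uIcc_of_le ht.le]
        exact fun s hs => hs.1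
      exact intervalIntegral.intervalIntegral_pos_of_pos_on hcont.intervalIntegrable
        (fun s hs => lt_of_lt_of_le hβlo (hβb s hs.1.le).1) ht
    have hM0 : 0 < m t := by rw [hm t]; exact Real.exp_pos _
    have hM1 : m t < 1 := by
      rw [hm t, ← Real.exp_zero]
      exact Real.exp_lt_exp.2 (by linarith)
    have hM2 : (m t)^2 < 1 := by nlinarith
    have hS2 : (σ t)^2 = 1 - (m t)^2 := by
      rw [hσ t]; exact Real.sq_sqrt (by nlinarith)
    have hS0 : 0 < σ t := by
      rw [hσ t]; exact Real.sqrt_pos.2 (by nlinarith)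
    constructor
    · -- lower bound
      have hlow := aux_lower d hd (m t) (σ t) Cf hM0 hM1 hS0 hS2 hCf p0 hp0meas hp0nn
        hp0supp (fun z hz => (hp0bd z hz).1) (fun z hz => (hp0bd z hz).2) x
      rw [← hp t x] at hlow
      refine le_trans ?_ hlow
      set A := max (‖x‖ - m t) 0 with hA
      have hq : (((Real.sqrt (2*Real.pi))⁻¹ * Real.exp (-1)) *
          Real.exp (-A^2/(σ t)^2))^d
          = ((Real.sqrt (2*Real.pi))⁻¹ * Real.exp (-1))^d *
            Real.exp (-(d:ℝ) * A^2/(σ t)^2) := by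
        rw [mul_pow]
        congr 1
        rw [← Real.exp_nat_mul]
        congr 1
        ring
      rw [hq, mul_inv, ← mul_assoc]
      apply mul_le_mul_of_nonneg_right ?_ (Real.exp_pos _).le
      apply mul_le_mul_of_nonneg_left ?_ (by positivity)
      rw [← inv_pow]
      apply pow_le_pow_left₀ (by positivity)
      have hsqrt3 : Real.sqrt (2*Real.pi) ≤ 3 := by
        have h9 : Real.sqrt (2*Real.pi) ≤ Real.sqrt 9 :=
          Real.sqrt_le_sqrt (by nlinarith [Real.pi_le_four])
        rwa [show (9:ℝ) = 3^2 by norm_num, Real.sqrt_sq (by norm_num : (0:ℝ) ≤ 3)] at h9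
      have h2pi : (0:ℝ) < Real.sqrt (2*Real.pi) := Real.sqrt_pos.2 (by positivity)
      rw [Real.exp_neg]
      rw [← mul_inv]
      apply inv_anti₀ (by positivity)
      apply mul_le_mul_of_nonneg_right hsqrt3 (Real.exp_pos 1).le
    · -- upper bound
      have hup := aux_upper d hd (m t) (σ t) Cf hM0 hM1 hS0 hS2 hCf p0 hp0nn
        hp0supp (fun z hz => (hp0bd z hz).2) x
      rw [← hp t x] at hup
      refine le_trans hup ?_
      apply mul_le_mul_of_nonneg_right ?_ (Real.exp_pos _).le
      apply mul_le_mul_of_nonneg_left ?_ (by linarith)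
      exact pow_le_pow_left₀ (by norm_num) h3e d
end

section
/- There exist constants C₁ and C₂, depending only on d and C_f, such that for every 0 < ε < 1/2, every t > 0, and every x ∈ ℝ^d with ‖x‖∞ ≤ m_t + C₁ σ_t √(log ε⁻¹), the score satisfies ‖∇ log p_t(x)‖ ≤ (C₂/σ_t) √(log ε⁻¹). -/
open MeasureTheory Real

section ScoreAux
open intervalIntegral

lemma gauss_cont (σ c : ℝ) : Continuous (fun u : ℝ => Real.exp (-(u-c)^2/(2*σ^2))) := by
  continuity

lemma gauss_anti (σ : ℝ) (hσ : 0 < σ) (a b : ℝ) :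
    ∫ u in a..b, u * Real.exp (-u^2/(2*σ^2)) =
      σ^2 * (Real.exp (-a^2/(2*σ^2)) - Real.exp (-b^2/(2*σ^2))) := by
  have hder : ∀ u : ℝ, HasDerivAt (fun v : ℝ => -σ^2 * Real.exp (-v^2/(2*σ^2)))
      (u * Real.exp (-u^2/(2*σ^2))) u := by
    intro u
    have h1 : HasDerivAt (fun v : ℝ => -v^2/(2*σ^2)) (-(2*u)/(2*σ^2)) u := by
      have := (hasDerivAt_pow 2 u).neg.div_const (2*σ^2)
      simpa using this
    have h2 := (h1.exp).const_mul (-σ^2)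
    refine h2.congr_deriv ?_
    have hσ0 : σ ≠ 0 := hσ.ne'
    field_simp
  rw [integral_eq_sub_of_hasDerivAt (fun u _ => hder u)]
  · ring
  · apply Continuous.intervalIntegrable
    have : Continuous (fun u : ℝ => Real.exp (-(u-0)^2/(2*σ^2))) := gauss_cont σ 0
    exact continuous_id.mul (by simpa using this)

lemma lemT (σ s A B : ℝ) (hσ : 0 < σ) (hs : 0 ≤ s) (hAB : A ≤ B) :
    ∫ u in A..B, max (u - s) 0 * Real.exp (-u^2/(2*σ^2)) ≤ σ^2 * Real.exp (-s^2/(2*σ^2)) := by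
  have hcont : Continuous (fun u : ℝ => max (u - s) 0 * Real.exp (-u^2/(2*σ^2))) := by
    apply Continuous.mul
    · exact (continuous_id.sub continuous_const).max continuous_const
    · have := gauss_cont σ 0; simpa using this
  set f := fun u : ℝ => max (u - s) 0 * Real.exp (-u^2/(2*σ^2)) with hf
  set a₁ := max A s with ha₁
  set b₁ := max B s with hb₁
  have hab : a₁ ≤ b₁ := max_le_max hAB le_rfl
  have hint : ∀ (u v : ℝ), IntervalIntegrable f volume u v :=
    fun u v => hcont.intervalIntegrable u v
  have hzero : ∀ C : ℝ, C ≤ s → (∫ u in C..s, f u) = 0 := by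
    intro C hC
    rw [intervalIntegral.integral_congr (g := fun _ => (0:ℝ)), intervalIntegral.integral_zero]
    intro u hu
    rw [Set.uIcc_of_le hC] at hu
    have : u - s ≤ 0 := by linarith [hu.2]
    simp [hf, max_eq_right this]
  have h1 : (∫ u in A..a₁, f u) = 0 := by
    by_cases h : A ≤ s
    · have e : a₁ = s := by rw [ha₁]; exact max_eq_right h
      rw [e]; exact hzero A h
    · have e : a₁ = A := by rw [ha₁]; exact max_eq_left (le_of_not_ge h)
      rw [e, intervalIntegral.integral_same]
  have h3 : (∫ u in b₁..B, f u) = 0 := by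
    by_cases h : B ≤ s
    · have e : b₁ = s := by rw [hb₁]; exact max_eq_right h
      rw [e, ← neg_eq_zero, ← intervalIntegral.integral_symm, hzero B h]
    · have e : b₁ = B := by rw [hb₁]; exact max_eq_left (le_of_not_ge h)
      rw [e, intervalIntegral.integral_same]
  have hsplit : (∫ u in A..B, f u) = (∫ u in A..a₁, f u) + (∫ u in a₁..b₁, f u) + (∫ u in b₁..B, f u) := by
    rw [intervalIntegral.integral_add_adjacent_intervals (hint A a₁) (hint a₁ b₁),
      intervalIntegral.integral_add_adjacent_intervals (hint A b₁) (hint b₁ B)]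
  have hmid : (∫ u in a₁..b₁, f u) ≤ σ^2 * Real.exp (-s^2/(2*σ^2)) := by
    have hmono : (∫ u in a₁..b₁, f u) ≤ ∫ u in a₁..b₁, u * Real.exp (-u^2/(2*σ^2)) := by
      apply intervalIntegral.integral_mono_on hab (hint a₁ b₁)
      · apply Continuous.intervalIntegrable
        have : Continuous (fun u : ℝ => Real.exp (-(u-0)^2/(2*σ^2))) := gauss_cont σ 0
        exact continuous_id.mul (by simpa using this)
      · intro u hu
        have h1 : s ≤ u := le_trans (le_max_right A s) hu.1
        have h2 : 0 ≤ u := le_trans hs h1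
        have : max (u - s) 0 ≤ u := by
          apply max_le _ h2; linarith
        exact mul_le_mul_of_nonneg_right this (Real.exp_nonneg _)
    rw [gauss_anti σ hσ] at hmono
    have ha1s : s ≤ a₁ := le_max_right A s
    have h1 : Real.exp (-a₁^2/(2*σ^2)) ≤ Real.exp (-s^2/(2*σ^2)) := by
      apply Real.exp_le_exp.mpr
      have h2 : s^2 ≤ a₁^2 := by nlinarith
      have hd : (0:ℝ) < 2*σ^2 := by positivity
      apply (div_le_div_iff_of_pos_right hd).mpr
      linarith
    calc (∫ u in a₁..b₁, f u) ≤ σ^2 * (Real.exp (-a₁^2/(2*σ^2)) - Real.exp (-b₁^2/(2*σ^2))) := hmono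
      _ ≤ σ^2 * Real.exp (-s^2/(2*σ^2)) := by
          have := Real.exp_nonneg (-b₁^2/(2*σ^2))
          nlinarith [sq_nonneg σ]
  calc (∫ u in A..B, f u) = _ := hsplit
    _ ≤ σ^2 * Real.exp (-s^2/(2*σ^2)) := by rw [h1, h3]; simpa using hmid

lemma lemTneg (σ s A B : ℝ) (hσ : 0 < σ) (hs : 0 ≤ s) (hAB : A ≤ B) :
    ∫ u in A..B, max (-u - s) 0 * Real.exp (-u^2/(2*σ^2)) ≤ σ^2 * Real.exp (-s^2/(2*σ^2)) := by
  have h := intervalIntegral.integral_comp_neg (a := A) (b := B)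
    (f := fun u : ℝ => max (u - s) 0 * Real.exp (-u^2/(2*σ^2)))
  have heq : (∫ u in A..B, max (-u - s) 0 * Real.exp (-u^2/(2*σ^2)))
      = ∫ u in (-B)..(-A), max (u - s) 0 * Real.exp (-u^2/(2*σ^2)) := by
    rw [← h]
    apply intervalIntegral.integral_congr
    intro u _
    simp [neg_sq]
  rw [heq]
  exact lemT σ s (-B) (-A) hσ hs (by linarith)

lemma lemD (σ A B : ℝ) (hσ : 0 < σ) (hAB : A ≤ B) :
    min σ (B - A) * Real.exp (-(max 0 (max A (-B)) + min σ (B - A))^2/(2*σ^2))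
      ≤ ∫ u in A..B, Real.exp (-u^2/(2*σ^2)) := by
  set τ := max 0 (max A (-B)) with hτ
  set ℓ := min σ (B - A) with hℓ
  have hτ0 : 0 ≤ τ := le_max_left _ _
  have hℓ0 : 0 ≤ ℓ := le_min (le_of_lt hσ) (by linarith)
  have hℓBA : ℓ ≤ B - A := min_le_right _ _
  set a₂ := max A (min 0 (B - ℓ)) with ha₂
  have hA2 : A ≤ a₂ := le_max_left _ _
  have h2B : a₂ + ℓ ≤ B := by
    have : a₂ ≤ B - ℓ := max_le (by linarith) (min_le_right _ _)
    linarith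
  have ha2τ : a₂ ≤ τ := by
    apply max_le
    · exact le_trans (le_trans (le_max_left A (-B)) (le_max_right 0 _)) le_rfl
    · exact le_trans (min_le_left _ _) hτ0
  have ha2lo : -(τ + ℓ) ≤ a₂ := by
    have h1 : -B ≤ τ := le_trans (le_max_right A (-B)) (le_max_right 0 _)
    have : -(τ + ℓ) ≤ min 0 (B - ℓ) := le_min (by linarith) (by linarith)
    exact le_trans this (le_max_right _ _)
  have hcont : Continuous (fun u : ℝ => Real.exp (-u^2/(2*σ^2))) := by
    have := gauss_cont σ 0; simpa using this
  have hint : ∀ u v : ℝ, IntervalIntegrable (fun u : ℝ => Real.exp (-u^2/(2*σ^2))) volume u v :=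
    fun u v => hcont.intervalIntegrable u v
  have hsplit : (∫ u in A..B, Real.exp (-u^2/(2*σ^2)))
      = (∫ u in A..a₂, Real.exp (-u^2/(2*σ^2))) + (∫ u in a₂..(a₂+ℓ), Real.exp (-u^2/(2*σ^2)))
        + (∫ u in (a₂+ℓ)..B, Real.exp (-u^2/(2*σ^2))) := by
    rw [intervalIntegral.integral_add_adjacent_intervals (hint A a₂) (hint a₂ (a₂+ℓ)),
      intervalIntegral.integral_add_adjacent_intervals (hint A (a₂+ℓ)) (hint (a₂+ℓ) B)]
  have h1 : 0 ≤ ∫ u in A..a₂, Real.exp (-u^2/(2*σ^2)) :=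
    intervalIntegral.integral_nonneg hA2 (fun u _ => Real.exp_nonneg _)
  have h3 : 0 ≤ ∫ u in (a₂+ℓ)..B, Real.exp (-u^2/(2*σ^2)) :=
    intervalIntegral.integral_nonneg h2B (fun u _ => Real.exp_nonneg _)
  have hmid : ℓ * Real.exp (-(τ+ℓ)^2/(2*σ^2)) ≤ ∫ u in a₂..(a₂+ℓ), Real.exp (-u^2/(2*σ^2)) := by
    have hle : a₂ ≤ a₂ + ℓ := by linarith
    have hmono : (∫ u in a₂..(a₂+ℓ), (fun _ : ℝ => Real.exp (-(τ+ℓ)^2/(2*σ^2))) u)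
        ≤ ∫ u in a₂..(a₂+ℓ), Real.exp (-u^2/(2*σ^2)) := by
      have hci : IntervalIntegrable (fun _ : ℝ => Real.exp (-(τ+ℓ)^2/(2*σ^2))) volume a₂ (a₂+ℓ) :=
        intervalIntegrable_const
      apply intervalIntegral.integral_mono_on hle hci (hint _ _)
      intro u hu
      apply Real.exp_le_exp.mpr
      apply (div_le_div_iff_of_pos_right (by positivity)).mpr
      have habs : u^2 ≤ (τ+ℓ)^2 := by
        apply sq_le_sq'
        · linarith [hu.1]
        · linarith [hu.2, ha2τ]
      linarith
    rw [intervalIntegral.integral_const] at hmono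
    simpa using hmono
  linarith [hmid, hsplit]

lemma lemU (σ A B : ℝ) (hσ : 0 < σ) (hAB : A ≤ B) :
    ∫ u in A..B, |u| * Real.exp (-u^2/(2*σ^2))
      ≤ (max 0 (max A (-B)) + 4*σ) * ∫ u in A..B, Real.exp (-u^2/(2*σ^2)) := by
  set τ := max 0 (max A (-B)) with hτ
  have hτ0 : 0 ≤ τ := le_max_left _ _
  have hAτ : A ≤ τ := le_trans (le_max_left A (-B)) (le_max_right 0 _)
  have hBτ : -B ≤ τ := le_trans (le_max_right A (-B)) (le_max_right 0 _)
  have hcont : Continuous (fun u : ℝ => Real.exp (-u^2/(2*σ^2))) := by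
    have := gauss_cont σ 0; simpa using this
  have hcontN : Continuous (fun u : ℝ => |u| * Real.exp (-u^2/(2*σ^2))) :=
    continuous_abs.mul hcont
  have hD0 : 0 ≤ ∫ u in A..B, Real.exp (-u^2/(2*σ^2)) :=
    intervalIntegral.integral_nonneg hAB (fun u _ => Real.exp_nonneg _)
  by_cases hc : B - A ≤ σ
  · -- short interval: pointwise bound
    have hpt : ∀ u ∈ Set.Icc A B, |u| * Real.exp (-u^2/(2*σ^2))
        ≤ (fun _ : ℝ => (τ + σ)) u * Real.exp (-u^2/(2*σ^2)) := by
      intro u hu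
      have h1 : |u| ≤ τ + (B - A) := by
        rcases abs_cases u with ⟨h, _⟩ | ⟨h, _⟩ <;> rw [h]
        · linarith [hu.2]
        · linarith [hu.1]
      have : |u| ≤ τ + σ := by linarith
      exact mul_le_mul_of_nonneg_right this (Real.exp_nonneg _)
    have := intervalIntegral.integral_mono_on (μ := volume) hAB (hcontN.intervalIntegrable _ _)
      ((continuous_const.mul hcont).intervalIntegrable _ _) hpt
    simp only [Pi.mul_apply] at this
    rw [intervalIntegral.integral_const_mul] at this
    refine this.trans ?_
    apply mul_le_mul_of_nonneg_right (by linarith) hD0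
  · -- long interval
    push_neg at hc
    set s := τ + 3*σ with hs
    have hs0 : 0 ≤ s := by simp [hs]; linarith
    have hpt : ∀ u ∈ Set.Icc A B, |u| * Real.exp (-u^2/(2*σ^2))
        ≤ (fun u : ℝ => s * Real.exp (-u^2/(2*σ^2)) + max (u - s) 0 * Real.exp (-u^2/(2*σ^2))
            + max (-u - s) 0 * Real.exp (-u^2/(2*σ^2))) u := by
      intro u _
      have h1 : u - s ≤ max (u - s) 0 := le_max_left _ _
      have h2 : -u - s ≤ max (-u - s) 0 := le_max_left _ _
      have h3 : (0:ℝ) ≤ max (u - s) 0 := le_max_right _ _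
      have h4 : (0:ℝ) ≤ max (-u - s) 0 := le_max_right _ _
      have habs : |u| ≤ s + max (u - s) 0 + max (-u - s) 0 := by
        rcases abs_cases u with ⟨h, _⟩ | ⟨h, _⟩ <;> rw [h] <;> linarith
      calc |u| * Real.exp (-u^2/(2*σ^2))
          ≤ (s + max (u - s) 0 + max (-u - s) 0) * Real.exp (-u^2/(2*σ^2)) :=
            mul_le_mul_of_nonneg_right habs (Real.exp_nonneg _)
        _ = _ := by ring
    have hintS : IntervalIntegrable (fun u : ℝ => s * Real.exp (-u^2/(2*σ^2))) volume A B :=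
      (continuous_const.mul hcont).intervalIntegrable _ _
    have hintT1 : IntervalIntegrable (fun u : ℝ => max (u - s) 0 * Real.exp (-u^2/(2*σ^2))) volume A B := by
      exact (((continuous_id.sub continuous_const).max continuous_const).mul hcont).intervalIntegrable _ _
    have hintT2 : IntervalIntegrable (fun u : ℝ => max (-u - s) 0 * Real.exp (-u^2/(2*σ^2))) volume A B := by
      exact (((continuous_id.neg.sub continuous_const).max continuous_const).mul hcont).intervalIntegrable _ _
    have hmono := intervalIntegral.integral_mono_on (μ := volume) hAB (hcontN.intervalIntegrable _ _)
      ((hintS.add hintT1).add hintT2) hpt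
    rw [intervalIntegral.integral_add (hintS.add hintT1) hintT2,
      intervalIntegral.integral_add hintS hintT1,
      intervalIntegral.integral_const_mul] at hmono
    have hT1 := lemT σ s A B hσ hs0 hAB
    have hT2 := lemTneg σ s A B hσ hs0 hAB
    have hDlow := lemD σ A B hσ hAB
    have hℓ : min σ (B - A) = σ := min_eq_left (le_of_lt hc)
    rw [hℓ] at hDlow
    -- 2σ² exp(-s²/2σ²) ≤ σ D
    have hkey : 2*σ^2 * Real.exp (-s^2/(2*σ^2)) ≤ σ * ∫ u in A..B, Real.exp (-u^2/(2*σ^2)) := by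
      have hexp : Real.exp (-s^2/(2*σ^2)) ≤ Real.exp (-(τ+σ)^2/(2*σ^2)) * Real.exp (-4) := by
        rw [← Real.exp_add]
        apply Real.exp_le_exp.mpr
        rw [div_add' _ _ _ (by positivity : (2*σ^2:ℝ) ≠ 0)]
        apply (div_le_div_iff_of_pos_right (by positivity)).mpr
        have : s^2 = (τ+σ)^2 + 4*τ*σ + 8*σ^2 := by rw [hs]; ring
        nlinarith [mul_nonneg hτ0 (le_of_lt hσ)]
      have hexp4 : Real.exp (-4:ℝ) ≤ 1/2 := by
        have h2 : (2:ℝ) ≤ Real.exp 4 := by linarith [Real.add_one_le_exp (4:ℝ)]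
        rw [Real.exp_neg]
        calc (Real.exp 4)⁻¹ ≤ (2:ℝ)⁻¹ := by
              apply inv_anti₀ (by norm_num) h2
          _ = 1/2 := by norm_num
      calc 2*σ^2 * Real.exp (-s^2/(2*σ^2))
          ≤ 2*σ^2 * (Real.exp (-(τ+σ)^2/(2*σ^2)) * Real.exp (-4)) := by
            apply mul_le_mul_of_nonneg_left hexp (by positivity)
        _ = (2 * Real.exp (-4)) * (σ * (σ * Real.exp (-(τ+σ)^2/(2*σ^2)))) := by ring
        _ ≤ 1 * (σ * (σ * Real.exp (-(τ+σ)^2/(2*σ^2)))) := by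
            apply mul_le_mul_of_nonneg_right (by linarith) (by positivity)
        _ = σ * (σ * Real.exp (-(τ+σ)^2/(2*σ^2))) := by ring
        _ ≤ σ * ∫ u in A..B, Real.exp (-u^2/(2*σ^2)) :=
            mul_le_mul_of_nonneg_left hDlow (le_of_lt hσ)
    calc ∫ u in A..B, |u| * Real.exp (-u^2/(2*σ^2))
        ≤ s * (∫ u in A..B, Real.exp (-u^2/(2*σ^2)))
          + (∫ u in A..B, max (u - s) 0 * Real.exp (-u^2/(2*σ^2)))
          + (∫ u in A..B, max (-u - s) 0 * Real.exp (-u^2/(2*σ^2))) := hmono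
      _ ≤ s * (∫ u in A..B, Real.exp (-u^2/(2*σ^2))) + σ^2 * Real.exp (-s^2/(2*σ^2))
          + σ^2 * Real.exp (-s^2/(2*σ^2)) := by linarith
      _ ≤ s * (∫ u in A..B, Real.exp (-u^2/(2*σ^2))) + σ * ∫ u in A..B, Real.exp (-u^2/(2*σ^2)) := by
          linarith
      _ = (τ + 4*σ) * ∫ u in A..B, Real.exp (-u^2/(2*σ^2)) := by rw [hs]; ring

lemma lem1d (m σ c : ℝ) (hm : 0 < m) (hσ : 0 < σ) :
    ∫ y in (-1:ℝ)..1, |c - m*y| * Real.exp (-(c-m*y)^2/(2*σ^2))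
      ≤ (max 0 (|c| - m) + 4*σ) * ∫ y in (-1:ℝ)..1, Real.exp (-(c-m*y)^2/(2*σ^2)) := by
  have hm' : m ≠ 0 := ne_of_gt hm
  have hN := intervalIntegral.integral_comp_sub_mul
    (f := fun u : ℝ => |u| * Real.exp (-u^2/(2*σ^2))) (a := (-1:ℝ)) (b := 1) hm' c
  have hD := intervalIntegral.integral_comp_sub_mul
    (f := fun u : ℝ => Real.exp (-u^2/(2*σ^2))) (a := (-1:ℝ)) (b := 1) hm' c
  simp only [mul_one, mul_neg, smul_eq_mul] at hN hD
  rw [show c - -m = c + m by ring] at hN hD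
  have hAB : c - m ≤ c + m := by linarith
  have hU := lemU σ (c - m) (c + m) hσ hAB
  have hτ : max 0 (max (c - m) (-(c + m))) = max 0 (|c| - m) := by
    congr 1
    rw [abs_eq_max_neg]
    rw [show -(c+m) = -c - m by ring, ← max_sub_sub_right]
  rw [hτ] at hU
  have hDnn : 0 ≤ ∫ u in (c-m)..(c+m), Real.exp (-u^2/(2*σ^2)) :=
    intervalIntegral.integral_nonneg hAB (fun u _ => Real.exp_nonneg _)
  rw [hN, hD]
  calc m⁻¹ * ∫ u in (c-m)..(c+m), |u| * Real.exp (-u^2/(2*σ^2))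
      ≤ m⁻¹ * ((max 0 (|c| - m) + 4*σ) * ∫ u in (c-m)..(c+m), Real.exp (-u^2/(2*σ^2))) :=
        mul_le_mul_of_nonneg_left hU (by positivity)
    _ = (max 0 (|c| - m) + 4*σ) * (m⁻¹ * ∫ u in (c-m)..(c+m), Real.exp (-u^2/(2*σ^2))) := by ring

noncomputable def gker (d : ℕ) (m σ : ℝ) (x y : Fin d → ℝ) : ℝ :=
  Real.exp (-(∑ j, (x j - m * y j)^2)/(2*σ^2))

def cube (d : ℕ) : Set (Fin d → ℝ) := {y | ∀ j, |y j| ≤ 1}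

noncomputable def f1 (d : ℕ) (m σ : ℝ) (x : Fin d → ℝ) (j : Fin d) (v : ℝ) : ℝ :=
  Set.indicator (Set.Icc (-1:ℝ) 1) (fun w => Real.exp (-(x j - m*w)^2/(2*σ^2))) v

lemma cube_eq (d : ℕ) : cube d = Set.pi Set.univ (fun _ : Fin d => Set.Icc (-1:ℝ) 1) := by
  ext y
  simp only [cube, Set.mem_setOf_eq, Set.mem_pi, Set.mem_univ, forall_const, Set.mem_Icc, abs_le]

lemma cube_measurable (d : ℕ) : MeasurableSet (cube d) := by
  rw [cube_eq]
  exact MeasurableSet.univ_pi (fun _ => measurableSet_Icc)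

lemma cube_vol (d : ℕ) : volume (cube d) < ⊤ := by
  rw [cube_eq]
  exact ((isCompact_univ_pi (fun _ => isCompact_Icc)).measure_lt_top)

lemma gker_prod (d : ℕ) (m σ : ℝ) (x y : Fin d → ℝ) :
    gker d m σ x y = ∏ j, Real.exp (-(x j - m * y j)^2/(2*σ^2)) := by
  rw [gker, ← Real.exp_sum]
  congr 1
  rw [neg_div, Finset.sum_div, ← Finset.sum_neg_distrib]
  apply Finset.sum_congr rfl
  intro j _
  rw [neg_div]

lemma gker_pos (d : ℕ) (m σ : ℝ) (x y : Fin d → ℝ) : 0 < gker d m σ x y := Real.exp_pos _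

lemma gker_le_one (d : ℕ) (m σ : ℝ) (x y : Fin d → ℝ) : gker d m σ x y ≤ 1 := by
  rw [gker]
  apply Real.exp_le_one_iff.mpr
  apply div_nonpos_of_nonpos_of_nonneg
  · simp only [neg_nonpos]
    positivity
  · positivity

lemma ind_prod (d : ℕ) (m σ : ℝ) (x y : Fin d → ℝ) :
    Set.indicator (cube d) (gker d m σ x) y = ∏ j, f1 d m σ x j (y j) := by
  by_cases hy : y ∈ cube d
  · rw [Set.indicator_of_mem hy, gker_prod]
    apply Finset.prod_congr rfl
    intro j _
    rw [f1, Set.indicator_of_mem]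
    rw [Set.mem_Icc, ← abs_le]
    exact hy j
  · rw [Set.indicator_of_notMem hy]
    have : ∃ j, ¬ |y j| ≤ 1 := by
      by_contra h
      push_neg at h
      exact hy (fun j => h j)
    obtain ⟨j, hj⟩ := this
    rw [eq_comm]
    apply Finset.prod_eq_zero (Finset.mem_univ j)
    rw [f1, Set.indicator_of_notMem]
    rw [Set.mem_Icc, ← abs_le]
    exact hj

lemma f1_nonneg (d : ℕ) (m σ : ℝ) (x : Fin d → ℝ) (j : Fin d) (v : ℝ) : 0 ≤ f1 d m σ x j v :=
  Set.indicator_nonneg (fun w _ => Real.exp_nonneg _) v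

lemma f1_le_one (d : ℕ) (m σ : ℝ) (x : Fin d → ℝ) (j : Fin d) (v : ℝ) : f1 d m σ x j v ≤ 1 := by
  rw [f1]
  by_cases h : v ∈ Set.Icc (-1:ℝ) 1
  · rw [Set.indicator_of_mem h]
    apply Real.exp_le_one_iff.mpr
    apply div_nonpos_of_nonpos_of_nonneg (by simp [neg_nonpos]; positivity) (by positivity)
  · rw [Set.indicator_of_notMem h]; norm_num

lemma f1_meas (d : ℕ) (m σ : ℝ) (x : Fin d → ℝ) (j : Fin d) : Measurable (f1 d m σ x j) := by
  apply Measurable.indicator ?_ measurableSet_Icc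
  fun_prop

lemma f1_integral (d : ℕ) (m σ : ℝ) (x : Fin d → ℝ) (j : Fin d) :
    ∫ v, f1 d m σ x j v = ∫ v in (-1:ℝ)..1, Real.exp (-(x j - m*v)^2/(2*σ^2)) := by
  simp only [f1]
  rw [MeasureTheory.integral_indicator measurableSet_Icc,
    MeasureTheory.integral_Icc_eq_integral_Ioc,
    ← intervalIntegral.integral_of_le (by norm_num : (-1:ℝ) ≤ 1)]

lemma g1_eq (d : ℕ) (m σ : ℝ) (x : Fin d → ℝ) (i : Fin d) (v : ℝ) :
    Set.indicator (Set.Icc (-1:ℝ) 1)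
      (fun w => |x i - m*w| * Real.exp (-(x i - m*w)^2/(2*σ^2))) v
      = |x i - m*v| * f1 d m σ x i v := by
  simp only [f1]
  by_cases h : v ∈ Set.Icc (-1:ℝ) 1
  · rw [Set.indicator_of_mem h, Set.indicator_of_mem h]
  · rw [Set.indicator_of_notMem h, Set.indicator_of_notMem h, mul_zero]

lemma g1_integral (d : ℕ) (m σ : ℝ) (x : Fin d → ℝ) (i : Fin d) :
    ∫ v, |x i - m*v| * f1 d m σ x i v
      = ∫ v in (-1:ℝ)..1, |x i - m*v| * Real.exp (-(x i - m*v)^2/(2*σ^2)) := by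
  rw [show (fun v => |x i - m*v| * f1 d m σ x i v) = Set.indicator (Set.Icc (-1:ℝ) 1)
      (fun w => |x i - m*w| * Real.exp (-(x i - m*w)^2/(2*σ^2))) from funext fun v => (g1_eq d m σ x i v).symm,
    MeasureTheory.integral_indicator measurableSet_Icc,
    MeasureTheory.integral_Icc_eq_integral_Ioc,
    ← intervalIntegral.integral_of_le (by norm_num : (-1:ℝ) ≤ 1)]

lemma prod_f1_integrable (d : ℕ) (m σ : ℝ) (x : Fin d → ℝ) :
    Integrable (fun y : Fin d → ℝ => ∏ j, f1 d m σ x j (y j)) := by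
  apply MeasureTheory.Integrable.mono'
    (g := Set.indicator (cube d) (fun _ => (1:ℝ)))
  · exact (MeasureTheory.integrable_indicator_iff (cube_measurable d)).mpr
      (integrableOn_const (cube_vol d).ne)
  · apply Measurable.aestronglyMeasurable
    exact Finset.measurable_prod _ (fun j _ => (f1_meas d m σ x j).comp (measurable_pi_apply j))
  · filter_upwards [] with y
    rw [Real.norm_eq_abs, abs_of_nonneg (Finset.prod_nonneg (fun j _ => f1_nonneg d m σ x j (y j)))]
    by_cases hy : y ∈ cube d
    · rw [Set.indicator_of_mem hy]
      exact Finset.prod_le_one (fun j _ => f1_nonneg d m σ x j (y j))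
        (fun j _ => f1_le_one d m σ x j (y j))
    · rw [Set.indicator_of_notMem hy]
      rw [← ind_prod d m σ x y, Set.indicator_of_notMem hy]

lemma f1_int_pos (d : ℕ) (m σ : ℝ) (x : Fin d → ℝ) (j : Fin d) (hm : 0 < m) (hσ : 0 < σ) :
    0 < ∫ v, f1 d m σ x j v := by
  rw [f1_integral]
  have hcont : Continuous (fun v : ℝ => Real.exp (-(x j - m*v)^2/(2*σ^2))) := by
    have : Continuous (fun v : ℝ => Real.exp (-(v - x j / m * m + (x j - x j))^2/(2*σ^2))) := by
      continuity
    fun_prop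
  have hlow : ∀ v ∈ Set.Icc (-1:ℝ) 1,
      (fun _ : ℝ => Real.exp (-(|x j| + m)^2/(2*σ^2))) v ≤ Real.exp (-(x j - m*v)^2/(2*σ^2)) := by
    intro v hv
    apply Real.exp_le_exp.mpr
    apply (div_le_div_iff_of_pos_right (by positivity)).mpr
    have habs : |x j - m*v| ≤ |x j| + m := by
      calc |x j - m*v| ≤ |x j| + |m*v| := abs_sub _ _
        _ = |x j| + m * |v| := by rw [abs_mul, abs_of_pos hm]
        _ ≤ |x j| + m * 1 := by
            have := abs_le.mpr ⟨hv.1, hv.2⟩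
            nlinarith
        _ = |x j| + m := by ring
    have h2 := abs_le.mp habs
    nlinarith
  have hmono := intervalIntegral.integral_mono_on (μ := volume) (by norm_num : (-1:ℝ) ≤ 1)
    (intervalIntegrable_const) (hcont.intervalIntegrable _ _) hlow
  rw [intervalIntegral.integral_const] at hmono
  have : (0:ℝ) < 2 * Real.exp (-(|x j| + m)^2/(2*σ^2)) := by positivity
  calc (0:ℝ) < 2 * Real.exp (-(|x j| + m)^2/(2*σ^2)) := this
    _ = ((1:ℝ) - (-1)) • Real.exp (-(|x j| + m)^2/(2*σ^2)) := by norm_num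
    _ ≤ _ := hmono

lemma prod_F1_identity (d : ℕ) (m σ : ℝ) (x : Fin d → ℝ) (i : Fin d) (y : Fin d → ℝ) :
    (∏ j, (fun j' => if j' = i then (fun v => |x i - m*v| * f1 d m σ x i v) else f1 d m σ x j') j (y j))
      = |x i - m*(y i)| * ∏ j, f1 d m σ x j (y j) := by
  set F1 := fun j' => if j' = i then (fun v => |x i - m*v| * f1 d m σ x i v) else f1 d m σ x j' with hF1
  have h1 : ∏ j, F1 j (y j) = F1 i (y i) * ∏ j ∈ Finset.univ.erase i, F1 j (y j) :=
    (Finset.mul_prod_erase Finset.univ _ (Finset.mem_univ i)).symm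
  have h2 : ∏ j ∈ Finset.univ.erase i, F1 j (y j) = ∏ j ∈ Finset.univ.erase i, f1 d m σ x j (y j) := by
    apply Finset.prod_congr rfl
    intro j hj
    have : j ≠ i := Finset.ne_of_mem_erase hj
    simp [hF1, this]
  have h3 : ∏ j, f1 d m σ x j (y j) = f1 d m σ x i (y i) * ∏ j ∈ Finset.univ.erase i, f1 d m σ x j (y j) :=
    (Finset.mul_prod_erase Finset.univ _ (Finset.mem_univ i)).symm
  have h4 : F1 i (y i) = |x i - m*(y i)| * f1 d m σ x i (y i) := by simp [hF1]
  rw [h1, h2, h3, h4]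
  ring

lemma num_prod_le (d : ℕ) (m σ : ℝ) (x : Fin d → ℝ) (i : Fin d) (hm : 0 < m) (hσ : 0 < σ) (K : ℝ)
    (hK : (∫ v in (-1:ℝ)..1, |x i - m*v| * Real.exp (-(x i - m*v)^2/(2*σ^2)))
        ≤ K * ∫ v in (-1:ℝ)..1, Real.exp (-(x i - m*v)^2/(2*σ^2))) :
    ∫ y : Fin d → ℝ, |x i - m*(y i)| * ∏ j, f1 d m σ x j (y j)
      ≤ K * ∏ j, ∫ v, f1 d m σ x j v := by
  set F1 := fun j' => if j' = i then (fun v => |x i - m*v| * f1 d m σ x i v) else f1 d m σ x j' with hF1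
  have hfub : ∫ y : Fin d → ℝ, ∏ j, F1 j (y j) = ∏ j, ∫ v, F1 j v :=
    MeasureTheory.integral_fintype_prod_eq_prod F1
  have heq : ∫ y : Fin d → ℝ, |x i - m*(y i)| * ∏ j, f1 d m σ x j (y j) = ∏ j, ∫ v, F1 j v := by
    rw [← hfub]
    congr 1
    funext y
    exact (prod_F1_identity d m σ x i y).symm
  rw [heq]
  have hsplit : ∏ j, ∫ v, F1 j v = (∫ v, |x i - m*v| * f1 d m σ x i v)
      * ∏ j ∈ Finset.univ.erase i, ∫ v, f1 d m σ x j v := by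
    rw [← Finset.mul_prod_erase Finset.univ _ (Finset.mem_univ i)]
    congr 1
    · simp [hF1]
    · apply Finset.prod_congr rfl
      intro j hj
      have : j ≠ i := Finset.ne_of_mem_erase hj
      simp [hF1, this]
  have hsplit2 : ∏ j, ∫ v, f1 d m σ x j v = (∫ v, f1 d m σ x i v)
      * ∏ j ∈ Finset.univ.erase i, ∫ v, f1 d m σ x j v :=
    (Finset.mul_prod_erase Finset.univ _ (Finset.mem_univ i)).symm
  rw [hsplit, hsplit2]
  have hperase : (0:ℝ) ≤ ∏ j ∈ Finset.univ.erase i, ∫ v, f1 d m σ x j v :=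
    Finset.prod_nonneg (fun j _ => MeasureTheory.integral_nonneg (fun v => f1_nonneg d m σ x j v))
  have hJK : (∫ v, |x i - m*v| * f1 d m σ x i v) ≤ K * ∫ v, f1 d m σ x i v := by
    rw [g1_integral, f1_integral]
    exact hK
  calc (∫ v, |x i - m*v| * f1 d m σ x i v) * ∏ j ∈ Finset.univ.erase i, ∫ v, f1 d m σ x j v
      ≤ (K * ∫ v, f1 d m σ x i v) * ∏ j ∈ Finset.univ.erase i, ∫ v, f1 d m σ x j v :=
        mul_le_mul_of_nonneg_right hJK hperase
    _ = K * ((∫ v, f1 d m σ x i v) * ∏ j ∈ Finset.univ.erase i, ∫ v, f1 d m σ x j v) := by ring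

lemma prod_F1_integrable (d : ℕ) (m σ : ℝ) (x : Fin d → ℝ) (i : Fin d) :
    Integrable (fun y : Fin d → ℝ => |x i - m*(y i)| * ∏ j, f1 d m σ x j (y j)) := by
  apply MeasureTheory.Integrable.mono'
    (g := Set.indicator (cube d) (fun _ => |x i| + |m|))
  · exact (MeasureTheory.integrable_indicator_iff (cube_measurable d)).mpr
      (integrableOn_const (cube_vol d).ne)
  · apply Measurable.aestronglyMeasurable
    apply Measurable.mul
    · fun_prop
    · exact Finset.measurable_prod _ (fun j _ => (f1_meas d m σ x j).comp (measurable_pi_apply j))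
  · filter_upwards [] with y
    have hpn : 0 ≤ ∏ j, f1 d m σ x j (y j) :=
      Finset.prod_nonneg (fun j _ => f1_nonneg d m σ x j (y j))
    rw [Real.norm_eq_abs, abs_of_nonneg (mul_nonneg (abs_nonneg _) hpn)]
    by_cases hy : y ∈ cube d
    · rw [Set.indicator_of_mem hy]
      have h1 : |x i - m*(y i)| ≤ |x i| + |m| := by
        calc |x i - m*(y i)| ≤ |x i| + |m*(y i)| := abs_sub _ _
          _ = |x i| + |m| * |y i| := by rw [abs_mul]
          _ ≤ |x i| + |m| * 1 := by
              have := hy i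
              nlinarith [abs_nonneg m]
          _ = |x i| + |m| := by ring
      have h2 : ∏ j, f1 d m σ x j (y j) ≤ 1 :=
        Finset.prod_le_one (fun j _ => f1_nonneg d m σ x j (y j))
          (fun j _ => f1_le_one d m σ x j (y j))
      nlinarith [abs_nonneg (x i - m*(y i))]
    · rw [Set.indicator_of_notMem hy, ← ind_prod d m σ x y, Set.indicator_of_notMem hy, mul_zero]

noncomputable def Lmap (d : ℕ) (m σ : ℝ) (z y : Fin d → ℝ) : (Fin d → ℝ) →L[ℝ] ℝ :=
  ∑ j, (-(z j - m * y j)/σ^2) • (ContinuousLinearMap.proj (R := ℝ) (φ := fun _ : Fin d => ℝ) j)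

lemma hasF (d : ℕ) (m σ : ℝ) (hσ : 0 < σ) (c₀ : ℝ) (p0 : (Fin d → ℝ) → ℝ)
    (y z : Fin d → ℝ) :
    HasFDerivAt (fun w => p0 y * (c₀ * gker d m σ w y))
      ((p0 y * (c₀ * gker d m σ z y)) • Lmap d m σ z y) z := by
  have h1 : ∀ j : Fin d, HasFDerivAt (fun w : Fin d → ℝ => w j - m * y j)
      (ContinuousLinearMap.proj (R := ℝ) (φ := fun _ : Fin d => ℝ) j) z :=
    fun j => ((ContinuousLinearMap.proj (R := ℝ) (φ := fun _ : Fin d => ℝ) j).hasFDerivAt).sub_const (m * y j)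
  have hsq : ∀ j : Fin d, HasFDerivAt (fun w : Fin d → ℝ => (w j - m * y j)^2)
      ((2*(z j - m * y j)) • (ContinuousLinearMap.proj (R := ℝ) (φ := fun _ : Fin d => ℝ) j)) z := by
    intro j
    have h := (h1 j).mul (h1 j)
    have heq : (fun w : Fin d → ℝ => (w j - m*y j)^2)
        = fun w : Fin d → ℝ => (w j - m*y j) * (w j - m*y j) := by
      funext w; ring
    rw [heq, two_mul, add_smul]
    exact h
  have hSder := HasFDerivAt.sum (A := fun (j : Fin d) (w : Fin d → ℝ) => (w j - m * y j)^2)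
    (u := Finset.univ) (fun j (_ : j ∈ Finset.univ) => hsq j)
  have h2 := hSder.neg.mul_const ((2*σ^2)⁻¹)
  have h3 := (h2.exp.const_mul c₀).const_mul (p0 y)
  have hfun : (fun w => p0 y * (c₀ * gker d m σ w y))
      = (fun w : Fin d → ℝ => p0 y * (c₀ *
          Real.exp ((-∑ j, (fun (j : Fin d) (w : Fin d → ℝ) => (w j - m * y j)^2) j w) * (2*σ^2)⁻¹))) := by
    funext w
    simp only [gker]
    rw [div_eq_mul_inv]
  have hder : (p0 y * (c₀ * gker d m σ z y)) • Lmap d m σ z y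
      = p0 y • c₀ • Real.exp ((-∑ j, (fun (j : Fin d) (w : Fin d → ℝ) => (w j - m * y j)^2) j z) * (2*σ^2)⁻¹) •
          (2*σ^2)⁻¹ • (-∑ j : Fin d, (2*(z j - m * y j)) • (ContinuousLinearMap.proj (R := ℝ) (φ := fun _ : Fin d => ℝ) j)) := by
    apply ContinuousLinearMap.ext
    intro v
    simp only [Lmap, gker, ContinuousLinearMap.smul_apply, ContinuousLinearMap.coe_sum',
      Finset.sum_apply, ContinuousLinearMap.proj_apply, smul_eq_mul,
      ContinuousLinearMap.coe_smul', Pi.smul_apply, ContinuousLinearMap.neg_apply,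
      div_eq_mul_inv]
    have hinner : ∑ j : Fin d, -(z j - m * y j) * (σ^2)⁻¹ * v j
        = (2*σ^2)⁻¹ * -(∑ j : Fin d, 2*(z j - m * y j) * v j) := by
      rw [← Finset.sum_neg_distrib, Finset.mul_sum]
      apply Finset.sum_congr rfl
      intro j _
      have hσ2 : (σ:ℝ)^2 ≠ 0 := by positivity
      field_simp
    rw [hinner]
    ring
  rw [hfun, hder]
  simpa only [Pi.neg_apply, Finset.sum_apply] using h3

lemma proj_norm_le (d : ℕ) (j : Fin d) :
    ‖(ContinuousLinearMap.proj (R := ℝ) (φ := fun _ : Fin d => ℝ) j)‖ ≤ 1 := by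
  apply ContinuousLinearMap.opNorm_le_bound _ zero_le_one
  intro v
  rw [one_mul]
  simpa using norm_le_pi_norm v j

lemma Lmap_norm (d : ℕ) (m σ : ℝ) (hσ : 0 < σ) (z y : Fin d → ℝ) :
    ‖Lmap d m σ z y‖ ≤ (∑ j, |z j - m * y j|)/σ^2 := by
  rw [Lmap, Finset.sum_div]
  refine le_trans (norm_sum_le Finset.univ _) ?_
  apply Finset.sum_le_sum
  intro j _
  refine le_trans (ContinuousLinearMap.opNorm_smul_le _ _) ?_
  refine le_trans (mul_le_mul_of_nonneg_left (proj_norm_le d j) (norm_nonneg _)) ?_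
  rw [mul_one, Real.norm_eq_abs, abs_div, abs_neg, abs_of_nonneg (by positivity : (0:ℝ) ≤ σ^2)]

lemma Lmap_cont (d : ℕ) (m σ : ℝ) (z : Fin d → ℝ) :
    Continuous (fun y : Fin d → ℝ => Lmap d m σ z y) := by
  apply continuous_finset_sum
  intro j _
  refine Continuous.smul (f := fun a : Fin d → ℝ => -(z j - m * a j) / σ^2) ?_ continuous_const
  fun_prop

lemma Lmap_apply_single (d : ℕ) (m σ : ℝ) (z y : Fin d → ℝ) (i : Fin d) :
    Lmap d m σ z y (Pi.single i 1) = -(z i - m * y i)/σ^2 := by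
  rw [Lmap]
  rw [ContinuousLinearMap.sum_apply]
  simp only [ContinuousLinearMap.smul_apply, ContinuousLinearMap.proj_apply, smul_eq_mul,
    Pi.single_apply, mul_ite, mul_one, mul_zero]
  rw [Finset.sum_ite_eq' Finset.univ i (fun j => -(z j - m * y j)/σ^2)]
  simp

lemma gker_cont (d : ℕ) (m σ : ℝ) (z : Fin d → ℝ) :
    Continuous (fun y : Fin d → ℝ => gker d m σ z y) := by
  simp only [gker]
  fun_prop

section coretest
open MeasureTheory Real

lemma core (d : ℕ) (m σ : ℝ) (hm0 : 0 < m) (hm1 : m ≤ 1) (hσ : 0 < σ)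
    (Cf : ℝ) (hCf : 1 ≤ Cf)
    (p0 : (Fin d → ℝ) → ℝ) (hp0meas : Measurable p0) (hp0nn : ∀ y, 0 ≤ p0 y)
    (hp0supp : ∀ y : Fin d → ℝ, ¬ (∀ j, |y j| ≤ 1) → p0 y = 0)
    (hp0bd : ∀ y : Fin d → ℝ, (∀ j, |y j| ≤ 1) → Cf⁻¹ ≤ p0 y ∧ p0 y ≤ Cf)
    (c₀ : ℝ) (hc₀ : 0 < c₀)
    (x : Fin d → ℝ) (R : ℝ) (hR : 0 ≤ R) (hx : ∀ j, |x j| ≤ m + σ * R) (i : Fin d) :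
    |fderiv ℝ (fun z : Fin d → ℝ => Real.log (∫ y : Fin d → ℝ, p0 y * (c₀ *
        Real.exp (-(∑ j, (z j - m * y j)^2)/(2*σ^2))))) x (Pi.single i 1)|
      ≤ Cf^2 * (R + 4) / σ := by
  have hσ2 : (0:ℝ) < σ^2 := by positivity
  -- the kernel in terms of gker
  have hgoal_fun : (fun z : Fin d → ℝ => Real.log (∫ y : Fin d → ℝ, p0 y * (c₀ *
      Real.exp (-(∑ j, (z j - m * y j)^2)/(2*σ^2)))))
      = (fun z : Fin d → ℝ => Real.log (∫ y : Fin d → ℝ, p0 y * (c₀ * gker d m σ z y))) := rfl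
  -- membership criterion
  have hcube_mem : ∀ y : Fin d → ℝ, y ∈ cube d ↔ ∀ j, |y j| ≤ 1 := fun y => Iff.rfl
  -- basic bounds on F
  have hFnn : ∀ z y : Fin d → ℝ, 0 ≤ p0 y * (c₀ * gker d m σ z y) :=
    fun z y => mul_nonneg (hp0nn y) (mul_nonneg (le_of_lt hc₀) (le_of_lt (gker_pos d m σ z y)))
  have hFbd : ∀ z y : Fin d → ℝ, ‖p0 y * (c₀ * gker d m σ z y)‖
      ≤ Set.indicator (cube d) (fun _ => Cf * c₀) y := by
    intro z y
    rw [Real.norm_eq_abs, abs_of_nonneg (hFnn z y)]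
    by_cases hy : y ∈ cube d
    · rw [Set.indicator_of_mem hy]
      have h1 := (hp0bd y hy).2
      have h2 := gker_le_one d m σ z y
      have h3 := gker_pos d m σ z y
      calc p0 y * (c₀ * gker d m σ z y) ≤ Cf * (c₀ * gker d m σ z y) :=
            mul_le_mul_of_nonneg_right h1 (by positivity)
        _ ≤ Cf * (c₀ * 1) := by
            apply mul_le_mul_of_nonneg_left ?_ (by linarith : (0:ℝ) ≤ Cf)
            apply mul_le_mul_of_nonneg_left h2 (le_of_lt hc₀)
        _ = Cf * c₀ := by ring
    · rw [Set.indicator_of_notMem hy, hp0supp y hy, zero_mul]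
  have hind_int : Integrable (Set.indicator (cube d) (fun _ => Cf * c₀)) volume :=
    (MeasureTheory.integrable_indicator_iff (cube_measurable d)).mpr
      (integrableOn_const (cube_vol d).ne)
  have hFmeas : ∀ z : Fin d → ℝ, AEStronglyMeasurable (fun y => p0 y * (c₀ * gker d m σ z y)) volume := by
    intro z
    exact (hp0meas.aestronglyMeasurable).mul
      ((continuous_const.mul (gker_cont d m σ z)).aestronglyMeasurable)
  have hFint : ∀ z : Fin d → ℝ, Integrable (fun y => p0 y * (c₀ * gker d m σ z y)) volume :=
    fun z => MeasureTheory.Integrable.mono' hind_int (hFmeas z) (Filter.Eventually.of_forall (hFbd z))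
  -- the F' bound
  have hF'bd : ∀ y : Fin d → ℝ, ∀ z ∈ Metric.ball x 1,
      ‖(p0 y * (c₀ * gker d m σ z y)) • Lmap d m σ z y‖
        ≤ Set.indicator (cube d) (fun _ => Cf * c₀ * ((d : ℝ) * (‖x‖ + 2) / σ^2)) y := by
    intro y z hz
    by_cases hy : y ∈ cube d
    · rw [Set.indicator_of_mem hy]
      refine le_trans (ContinuousLinearMap.opNorm_smul_le _ _) ?_
      have h1 : ‖p0 y * (c₀ * gker d m σ z y)‖ ≤ Cf * c₀ := by
        have := hFbd z y
        rwa [Set.indicator_of_mem hy] at this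
      have h2 : ‖Lmap d m σ z y‖ ≤ (d : ℝ) * (‖x‖ + 2) / σ^2 := by
        refine le_trans (Lmap_norm d m σ hσ z y) ?_
        have hzx : ‖z - x‖ < 1 := by
          rw [← dist_eq_norm]
          exact Metric.mem_ball.mp hz
        have hsum : (∑ j, |z j - m * y j|) ≤ (d:ℝ) * (‖x‖ + 2) := by
          calc (∑ j, |z j - m * y j|) ≤ ∑ _j : Fin d, (‖x‖ + 2) := by
                apply Finset.sum_le_sum
                intro j _
                have hzj : |z j| ≤ ‖x‖ + 1 := by
                  have h1 : ‖z j‖ ≤ ‖z‖ := norm_le_pi_norm z j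
                  have h2 : ‖z‖ - ‖x‖ ≤ ‖z - x‖ := norm_sub_norm_le z x
                  rw [Real.norm_eq_abs] at h1
                  linarith
                have hyj : m * |y j| ≤ 1 := by
                  have := hy j
                  nlinarith [abs_nonneg (y j)]
                calc |z j - m * y j| ≤ |z j| + |m * y j| := abs_sub _ _
                  _ = |z j| + m * |y j| := by rw [abs_mul, abs_of_pos hm0]
                  _ ≤ (‖x‖ + 1) + 1 := by linarith
                  _ = ‖x‖ + 2 := by ring
            _ = (d:ℝ) * (‖x‖ + 2) := by
                rw [Finset.sum_const, Finset.card_univ, Fintype.card_fin, nsmul_eq_mul]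
        gcongr
      calc ‖p0 y * (c₀ * gker d m σ z y)‖ * ‖Lmap d m σ z y‖
          ≤ (Cf * c₀) * ((d : ℝ) * (‖x‖ + 2) / σ^2) := by
            apply mul_le_mul h1 h2 (norm_nonneg _) (by positivity)
        _ = Cf * c₀ * ((d : ℝ) * (‖x‖ + 2) / σ^2) := by ring
    · rw [Set.indicator_of_notMem hy, hp0supp y (fun h => hy h), zero_mul, zero_smul, norm_zero]
  have hbnd_int : Integrable (Set.indicator (cube d)
      (fun _ => Cf * c₀ * ((d : ℝ) * (‖x‖ + 2) / σ^2))) volume :=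
    (MeasureTheory.integrable_indicator_iff (cube_measurable d)).mpr
      (integrableOn_const (cube_vol d).ne)
  have hF'meas : AEStronglyMeasurable (fun y : Fin d → ℝ =>
      (p0 y * (c₀ * gker d m σ x y)) • Lmap d m σ x y) volume := by
    apply AEStronglyMeasurable.smul (hFmeas x)
    exact (Lmap_cont d m σ x).aestronglyMeasurable
  have hF'int : Integrable (fun y : Fin d → ℝ =>
      (p0 y * (c₀ * gker d m σ x y)) • Lmap d m σ x y) volume := by
    apply MeasureTheory.Integrable.mono' hbnd_int hF'meas
    filter_upwards [] with y
    exact hF'bd y x (Metric.mem_ball_self one_pos)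
  -- the derivative of the integral
  have hqD : HasFDerivAt (fun z : Fin d → ℝ => ∫ y : Fin d → ℝ, p0 y * (c₀ * gker d m σ z y))
      (∫ y : Fin d → ℝ, (p0 y * (c₀ * gker d m σ x y)) • Lmap d m σ x y) x := by
    apply _root_.hasFDerivAt_integral_of_dominated_of_fderiv_le (s := Metric.ball x 1)
      (bound := Set.indicator (cube d) (fun _ => Cf * c₀ * ((d : ℝ) * (‖x‖ + 2) / σ^2)))
      (Metric.ball_mem_nhds x one_pos)
      (Filter.Eventually.of_forall hFmeas) (hFint x) hF'meas
      (Filter.Eventually.of_forall (fun y => hF'bd y))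
      hbnd_int
      (Filter.Eventually.of_forall (fun y z _ => hasF d m σ hσ c₀ p0 y z))
  -- denominator lower bound
  have hlow : ∀ y : Fin d → ℝ, Cf⁻¹ * (c₀ * ∏ j, f1 d m σ x j (y j))
      ≤ p0 y * (c₀ * gker d m σ x y) := by
    intro y
    rw [← ind_prod d m σ x y]
    by_cases hy : y ∈ cube d
    · rw [Set.indicator_of_mem hy]
      apply mul_le_mul_of_nonneg_right (hp0bd y hy).1
      exact mul_nonneg (le_of_lt hc₀) (le_of_lt (gker_pos d m σ x y))
    · rw [Set.indicator_of_notMem hy]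
      rw [mul_zero, mul_zero]
      exact hFnn x y
  have hPpos : 0 < ∏ j, ∫ v, f1 d m σ x j v :=
    Finset.prod_pos (fun j _ => f1_int_pos d m σ x j hm0 hσ)
  have hden : Cf⁻¹ * (c₀ * ∏ j, ∫ v, f1 d m σ x j v)
      ≤ ∫ y : Fin d → ℝ, p0 y * (c₀ * gker d m σ x y) := by
    have h1 : ∫ y : Fin d → ℝ, Cf⁻¹ * (c₀ * ∏ j, f1 d m σ x j (y j))
        = Cf⁻¹ * (c₀ * ∏ j, ∫ v, f1 d m σ x j v) := by
      rw [MeasureTheory.integral_const_mul, MeasureTheory.integral_const_mul,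
        MeasureTheory.integral_fintype_prod_volume_eq_prod (f1 d m σ x)]
    rw [← h1]
    apply MeasureTheory.integral_mono_of_nonneg ?_ (hFint x) (Filter.Eventually.of_forall hlow)
    filter_upwards [] with y
    have := Finset.prod_nonneg (fun j (_ : j ∈ Finset.univ) => f1_nonneg d m σ x j (y j))
    positivity
  have hqpos : 0 < ∫ y : Fin d → ℝ, p0 y * (c₀ * gker d m σ x y) := by
    apply lt_of_lt_of_le ?_ hden
    have hCfpos : (0:ℝ) < Cf⁻¹ := by positivity
    positivity
  -- numerator upper bound
  have hnum_ptw : ∀ y : Fin d → ℝ, p0 y * (c₀ * gker d m σ x y) * |x i - m * y i|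
      ≤ Cf * c₀ * (|x i - m * (y i)| * ∏ j, f1 d m σ x j (y j)) := by
    intro y
    by_cases hy : y ∈ cube d
    · have hgk : gker d m σ x y = ∏ j, f1 d m σ x j (y j) := by
        rw [← ind_prod d m σ x y, Set.indicator_of_mem hy]
      rw [hgk]
      have h1 := (hp0bd y hy).2
      have hpr : 0 ≤ ∏ j, f1 d m σ x j (y j) :=
        Finset.prod_nonneg (fun j _ => f1_nonneg d m σ x j (y j))
      have habs : (0:ℝ) ≤ |x i - m * y i| := abs_nonneg _
      nlinarith [hp0nn y, mul_nonneg (mul_nonneg (le_of_lt hc₀) hpr) habs]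
    · rw [hp0supp y hy, zero_mul, zero_mul]
      have hpr : 0 ≤ ∏ j, f1 d m σ x j (y j) :=
        Finset.prod_nonneg (fun j _ => f1_nonneg d m σ x j (y j))
      positivity
  have hK : (∫ v in (-1:ℝ)..1, |x i - m*v| * Real.exp (-(x i - m*v)^2/(2*σ^2)))
      ≤ (σ * R + 4*σ) * ∫ v in (-1:ℝ)..1, Real.exp (-(x i - m*v)^2/(2*σ^2)) := by
    refine le_trans (lem1d m σ (x i) hm0 hσ) ?_
    apply mul_le_mul_of_nonneg_right ?_
      (intervalIntegral.integral_nonneg (by norm_num) (fun v _ => Real.exp_nonneg _))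
    have h1 : |x i| - m ≤ σ * R := by have := hx i; linarith
    have h2 : max 0 (|x i| - m) ≤ σ * R := max_le (by positivity) h1
    linarith
  have hnum : ∫ y : Fin d → ℝ, p0 y * (c₀ * gker d m σ x y) * |x i - m * y i|
      ≤ Cf * c₀ * ((σ * R + 4*σ) * ∏ j, ∫ v, f1 d m σ x j v) := by
    have h2 : ∫ y : Fin d → ℝ, Cf * c₀ * (|x i - m * (y i)| * ∏ j, f1 d m σ x j (y j))
        = Cf * c₀ * ∫ y : Fin d → ℝ, |x i - m * (y i)| * ∏ j, f1 d m σ x j (y j) := by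
      rw [MeasureTheory.integral_const_mul]
    have h3 := num_prod_le d m σ x i hm0 hσ (σ * R + 4*σ) hK
    have h4 : ∫ y : Fin d → ℝ, p0 y * (c₀ * gker d m σ x y) * |x i - m * y i|
        ≤ ∫ y : Fin d → ℝ, Cf * c₀ * (|x i - m * (y i)| * ∏ j, f1 d m σ x j (y j)) := by
      apply MeasureTheory.integral_mono_of_nonneg ?_ ?_ (Filter.Eventually.of_forall hnum_ptw)
      · filter_upwards [] with y
        exact mul_nonneg (hFnn x y) (abs_nonneg _)
      · exact (MeasureTheory.Integrable.const_mul (prod_F1_integrable d m σ x i) _)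
    rw [h2] at h4
    refine le_trans h4 ?_
    exact mul_le_mul_of_nonneg_left h3 (by positivity)
  -- assemble
  rw [hgoal_fun]
  have hlog := hqD.log (ne_of_gt hqpos)
  rw [hlog.fderiv]
  rw [ContinuousLinearMap.smul_apply]
  rw [ContinuousLinearMap.integral_apply hF'int (Pi.single i 1)]
  have heval : ∀ y : Fin d → ℝ, ((p0 y * (c₀ * gker d m σ x y)) • Lmap d m σ x y) (Pi.single i 1)
      = p0 y * (c₀ * gker d m σ x y) * (-(x i - m * y i)/σ^2) := by
    intro y
    rw [ContinuousLinearMap.smul_apply, Lmap_apply_single, smul_eq_mul]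
  rw [smul_eq_mul, abs_mul]
  set q := ∫ y : Fin d → ℝ, p0 y * (c₀ * gker d m σ x y) with hq
  have habs_int : |∫ y : Fin d → ℝ, ((p0 y * (c₀ * gker d m σ x y)) • Lmap d m σ x y) (Pi.single i 1)|
      ≤ (∫ y : Fin d → ℝ, p0 y * (c₀ * gker d m σ x y) * |x i - m * y i|) / σ^2 := by
    rw [show (fun y : Fin d → ℝ => ((p0 y * (c₀ * gker d m σ x y)) • Lmap d m σ x y) (Pi.single i 1))
        = fun y : Fin d → ℝ => p0 y * (c₀ * gker d m σ x y) * (-(x i - m * y i)/σ^2)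
      from funext heval]
    rw [← Real.norm_eq_abs]
    refine le_trans (MeasureTheory.norm_integral_le_integral_norm _) ?_
    simp only [Real.norm_eq_abs]
    have hptw : ∀ y : Fin d → ℝ, |p0 y * (c₀ * gker d m σ x y) * (-(x i - m * y i)/σ^2)|
        = p0 y * (c₀ * gker d m σ x y) * |x i - m * y i| * (σ^2)⁻¹ := by
      intro y
      rw [abs_mul, abs_of_nonneg (hFnn x y), abs_div, abs_neg,
        abs_of_nonneg (le_of_lt hσ2), div_eq_mul_inv]
      ring
    rw [show (fun y : Fin d → ℝ => |p0 y * (c₀ * gker d m σ x y) * (-(x i - m * y i)/σ^2)|)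
        = fun y : Fin d → ℝ => p0 y * (c₀ * gker d m σ x y) * |x i - m * y i| * (σ^2)⁻¹
      from funext hptw]
    rw [MeasureTheory.integral_mul_const, div_eq_mul_inv]
  -- final numeric computation
  set P := ∏ j, ∫ v, f1 d m σ x j v with hP
  have hq_inv : |q⁻¹| ≤ (Cf⁻¹ * (c₀ * P))⁻¹ := by
    rw [abs_of_nonneg (le_of_lt (inv_pos.mpr hqpos))]
    apply inv_anti₀ (by positivity) hden
  calc |q⁻¹| * |∫ y : Fin d → ℝ, ((p0 y * (c₀ * gker d m σ x y)) • Lmap d m σ x y) (Pi.single i 1)|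
      ≤ (Cf⁻¹ * (c₀ * P))⁻¹ * ((Cf * c₀ * ((σ * R + 4*σ) * P)) / σ^2) := by
        apply mul_le_mul hq_inv (le_trans habs_int ?_) (abs_nonneg _) (by positivity)
        apply (div_le_div_iff_of_pos_right hσ2).mpr hnum
      _ = Cf^2 * (R + 4) / σ := by
        field_simp

end coretest


end ScoreAux

/-- On the region `‖x‖∞ ≤ m_t + C₁ σ_t √(log ε⁻¹)` the score is bounded:
`‖∇ log p_t(x)‖ ≤ (C₂/σ_t) √(log ε⁻¹)`, for constants `C₁, C₂` depending only on `d, C_f`. -/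
theorem statement6
    (d : ℕ) (hd : 1 ≤ d)
    (βlo βhi : ℝ) (hβlo : 0 < βlo) (hβhi : βlo ≤ βhi)
    (β : ℝ → ℝ) (hβc : ContinuousOn β (Set.Ici 0))
    (hβb : ∀ t : ℝ, 0 ≤ t → βlo ≤ β t ∧ β t ≤ βhi)
    (m σ : ℝ → ℝ)
    (hm : ∀ t : ℝ, m t = Real.exp (-(∫ s in (0:ℝ)..t, β s)))
    (hσ : ∀ t : ℝ, σ t = Real.sqrt (1 - (m t) ^ 2))
    (Cf : ℝ) (hCf : 1 ≤ Cf)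
    (p0 : (Fin d → ℝ) → ℝ) (hp0meas : Measurable p0)
    (hp0nn : ∀ x, 0 ≤ p0 x) (hp0int : (∫ x, p0 x) = 1)
    (hp0supp : ∀ x : Fin d → ℝ, ¬ (∀ i, |x i| ≤ 1) → p0 x = 0)
    (hp0bd : ∀ x : Fin d → ℝ, (∀ i, |x i| ≤ 1) → Cf⁻¹ ≤ p0 x ∧ p0 x ≤ Cf)
    (p : ℝ → (Fin d → ℝ) → ℝ)
    (hp : ∀ t : ℝ, ∀ x : Fin d → ℝ, p t x =
      ∫ y : Fin d → ℝ, p0 y * ((2 * Real.pi * (σ t) ^ 2) ^ (-(d : ℝ) / 2) *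
        Real.exp (-(∑ i, (x i - m t * y i) ^ 2) / (2 * (σ t) ^ 2))))
    (score : ℝ → (Fin d → ℝ) → (Fin d → ℝ))
    (hscore : ∀ t : ℝ, ∀ x : Fin d → ℝ, ∀ i : Fin d,
      score t x i = fderiv ℝ (fun z => Real.log (p t z)) x (Pi.single i 1)) :
    ∃ C₁ C₂ : ℝ, 0 < C₁ ∧ 0 < C₂ ∧ ∀ ε : ℝ, 0 < ε → ε < 1/2 → ∀ t : ℝ, 0 < t →
      ∀ x : Fin d → ℝ, ‖x‖ ≤ m t + C₁ * σ t * Real.sqrt (Real.log ε⁻¹) →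
        Real.sqrt (∑ i, (score t x i) ^ 2) ≤ (C₂ / σ t) * Real.sqrt (Real.log ε⁻¹) := by

  have hd0 : (0:ℝ) < (d:ℝ) := by exact_mod_cast Nat.lt_of_lt_of_le Nat.zero_lt_one hd
  have hsd : 0 < Real.sqrt d := Real.sqrt_pos.mpr hd0
  refine ⟨1, 6 * Real.sqrt d * Cf^2, one_pos, by positivity, ?_⟩
  intro ε hε hε2 t ht x hxnorm
  -- basic scalar facts
  have hm_pos : 0 < m t := by rw [hm]; exact Real.exp_pos _
  have hIβ : (0:ℝ) < ∫ s in (0:ℝ)..t, β s := by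
    have hsub : Set.uIcc (0:ℝ) t ⊆ Set.Ici 0 := by
      rw [Set.uIcc_of_le ht.le]
      exact fun u hu => hu.1
    have hci : ContinuousOn β (Set.uIcc (0:ℝ) t) := hβc.mono hsub
    have hint : IntervalIntegrable β volume 0 t := hci.intervalIntegrable
    have hmono := intervalIntegral.integral_mono_on (μ := volume) ht.le
      intervalIntegrable_const hint (fun u hu => (hβb u hu.1).1)
    rw [intervalIntegral.integral_const] at hmono
    have : (0:ℝ) < (t - 0) • βlo := by
      rw [smul_eq_mul]; nlinarith
    linarith
  have hm_lt1 : m t < 1 := by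
    rw [hm]
    apply Real.exp_lt_one_iff.mpr
    linarith
  have hσ_pos : 0 < σ t := by
    rw [hσ]
    apply Real.sqrt_pos.mpr
    nlinarith
  set L := Real.log ε⁻¹ with hLdef
  have hLlog2 : Real.log 2 ≤ L := by
    have h2inv : (2:ℝ) ≤ ε⁻¹ := by
      rw [show (2:ℝ) = ((2:ℝ)⁻¹)⁻¹ by norm_num]
      exact inv_anti₀ hε (by linarith)
    exact Real.log_le_log (by norm_num) h2inv
  set R := Real.sqrt L with hRdef
  have hR0 : 0 ≤ R := Real.sqrt_nonneg _
  have hR08 : (0.8:ℝ) ≤ R := by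
    rw [hRdef]
    rw [show (0.8:ℝ) = Real.sqrt 0.64 by
      rw [show (0.64:ℝ) = 0.8^2 by norm_num, Real.sqrt_sq (by norm_num)]]
    apply Real.sqrt_le_sqrt
    have := Real.log_two_gt_d9
    linarith
  -- coordinatewise bound on x
  have hxc : ∀ j, |x j| ≤ m t + σ t * R := by
    intro j
    have h1 : ‖x j‖ ≤ ‖x‖ := norm_le_pi_norm x j
    rw [Real.norm_eq_abs] at h1
    calc |x j| ≤ ‖x‖ := h1
      _ ≤ m t + 1 * σ t * R := hxnorm
      _ = m t + σ t * R := by ring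
  -- per-coordinate score bound
  have hsc : ∀ i : Fin d, |score t x i| ≤ Cf^2 * (R + 4) / σ t := by
    intro i
    rw [hscore t x i]
    have hfe : (fun z => Real.log (p t z))
        = (fun z : Fin d → ℝ => Real.log (∫ y : Fin d → ℝ, p0 y *
            ((2 * Real.pi * (σ t) ^ 2) ^ (-(d : ℝ) / 2) *
              Real.exp (-(∑ j, (z j - m t * y j) ^ 2) / (2 * (σ t) ^ 2))))) :=
      funext (fun z => by rw [hp t z])
    rw [hfe]
    exact core d (m t) (σ t) hm_pos hm_lt1.le hσ_pos Cf hCf p0 hp0meas hp0nn hp0supp hp0bd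
      _ (Real.rpow_pos_of_pos (by positivity) _) x R hR0 hxc i
  -- assemble the Euclidean norm bound
  have hb0 : 0 ≤ Cf^2 * (R + 4) / σ t := by positivity
  have hsum : ∑ i, (score t x i)^2 ≤ (d:ℝ) * (Cf^2 * (R + 4) / σ t)^2 := by
    calc ∑ i, (score t x i)^2 ≤ ∑ _i : Fin d, (Cf^2 * (R + 4) / σ t)^2 := by
          apply Finset.sum_le_sum
          intro i _
          have h := abs_le.mp (hsc i)
          exact sq_le_sq' h.1 h.2
      _ = (d:ℝ) * (Cf^2 * (R + 4) / σ t)^2 := by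
          rw [Finset.sum_const, Finset.card_univ, Fintype.card_fin, nsmul_eq_mul]
  calc Real.sqrt (∑ i, (score t x i)^2)
      ≤ Real.sqrt ((d:ℝ) * (Cf^2 * (R + 4) / σ t)^2) := Real.sqrt_le_sqrt hsum
    _ = Real.sqrt d * (Cf^2 * (R + 4) / σ t) := by
        rw [Real.sqrt_mul (le_of_lt hd0), Real.sqrt_sq hb0]
    _ ≤ Real.sqrt d * (Cf^2 * (6*R) / σ t) := by
        apply mul_le_mul_of_nonneg_left ?_ (Real.sqrt_nonneg _)
        apply (div_le_div_iff_of_pos_right hσ_pos).mpr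
        have : R + 4 ≤ 6 * R := by nlinarith
        nlinarith [sq_nonneg Cf]
    _ = (6 * Real.sqrt d * Cf^2 / σ t) * R := by ring
end

section
/- Let A > 0, 0 < m ≤ 1, σ > 0, x ∈ ℝ and 0 < ε < 1. Then for every integer k with k ≥ max{4eA², ⌈log₂(ε⁻¹)⌉} and every y ∈ [(x − σA)/m, (x + σA)/m], the truncated Taylor expansion of the Gaussian kernel satisfies | exp(−(x − m y)²/(2σ²)) − Σ_{s=0}^{k−1} ((−1)^s / s!) · (x − m y)^{2s} / (2^s σ^{2s}) | ≤ ε. -/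
open Real Finset

lemma aux_fact (n : ℕ) : (n:ℝ)^n ≤ (n.factorial : ℝ) * Real.exp 1 ^ n := by
  have h := Real.sum_le_exp_of_nonneg (x := (n:ℝ)) (n.cast_nonneg) (n+1)
  have hs : (n:ℝ)^n / n.factorial ≤ ∑ i ∈ range (n+1), (n:ℝ)^i / i.factorial :=
    Finset.single_le_sum (f := fun i => (n:ℝ)^i / i.factorial)
      (fun i _ => by positivity) (self_mem_range_succ n)
  have he : Real.exp (n:ℝ) = Real.exp 1 ^ n := by
    rw [← Real.exp_nat_mul, mul_one]
  have hF : (0:ℝ) < n.factorial := by positivity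
  rw [div_le_iff₀ hF] at hs
  calc (n:ℝ)^n ≤ (∑ i ∈ range (n+1), (n:ℝ)^i / i.factorial) * n.factorial := hs
    _ ≤ Real.exp (n:ℝ) * n.factorial := mul_le_mul_of_nonneg_right h hF.le
    _ = (n.factorial : ℝ) * Real.exp 1 ^ n := by rw [he]; ring

lemma real_exp_bound' {x : ℝ} {n : ℕ} (hx : |x| / n.succ ≤ 1/2) :
    |Real.exp x - ∑ m ∈ Finset.range n, x^m / m.factorial| ≤ |x|^n / n.factorial * 2 := by
  have h := Complex.exp_bound' (x := (x:ℂ)) (n := n)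
    (by rwa [Complex.norm_real, Real.norm_eq_abs])
  convert h using 2 <;>
  simp only [← Real.norm_eq_abs, ← Complex.norm_real, ← Complex.ofReal_sub, ← Complex.ofReal_exp,
    ← Complex.ofReal_sum, ← Complex.ofReal_pow, ← Complex.ofReal_div, ← Complex.ofReal_natCast]

/-- Truncated Taylor expansion of the Gaussian kernel: for
`k ≥ max{4eA², ⌈log₂ ε⁻¹⌉}` and `y ∈ [(x − σA)/m, (x + σA)/m]`, the degree-`(2k−2)` Taylor
polynomial of `exp(−(x − my)²/(2σ²))` is `ε`-accurate. -/
theorem statement11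
    (A : ℝ) (hA : 0 < A) (m : ℝ) (hm0 : 0 < m) (hm1 : m ≤ 1)
    (σ : ℝ) (hσ : 0 < σ) (x : ℝ)
    (ε : ℝ) (hε0 : 0 < ε) (hε1 : ε < 1)
    (k : ℕ) (hk1 : 4 * Real.exp 1 * A ^ 2 ≤ (k : ℝ))
    (hk2 : (⌈Real.logb 2 ε⁻¹⌉ : ℝ) ≤ (k : ℝ))
    (y : ℝ) (hy1 : (x - σ * A) / m ≤ y) (hy2 : y ≤ (x + σ * A) / m) :
    |Real.exp (-(x - m * y) ^ 2 / (2 * σ ^ 2)) -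
        ∑ s ∈ Finset.range k,
          ((-1 : ℝ) ^ s / (Nat.factorial s : ℝ)) * (x - m * y) ^ (2 * s) /
            (2 ^ s * σ ^ (2 * s))| ≤ ε := by
  have hE : (0:ℝ) < Real.exp 1 := Real.exp_pos 1
  have hE2 : (2:ℝ) ≤ Real.exp 1 := by
    have := Real.exp_one_gt_d9; linarith
  set t : ℝ := (x - m * y) ^ 2 / (2 * σ ^ 2) with ht
  have ht0 : 0 ≤ t := by positivity
  have hmy1 : x - σ * A ≤ m * y := by
    rw [div_le_iff₀ hm0] at hy1; linarith [hy1]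
  have hmy2 : m * y ≤ x + σ * A := by
    rw [le_div_iff₀ hm0] at hy2; linarith [hy2]
  have habs : |x - m * y| ≤ σ * A := abs_le.2 ⟨by linarith, by linarith⟩
  have hsq : (x - m * y) ^ 2 ≤ (σ * A) ^ 2 := by
    rw [← sq_abs]; exact pow_le_pow_left₀ (abs_nonneg _) habs 2
  have htA : t ≤ A ^ 2 / 2 := by
    rw [ht, div_le_div_iff₀ (by positivity) (by norm_num : (0:ℝ) < 2)]
    nlinarith
  have hk0 : 0 < k := by
    by_contra h
    push_neg at h
    interval_cases k
    · simp at hk1; nlinarith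
  have hk1' : (1:ℝ) ≤ k := by exact_mod_cast hk0
  have htk : t ≤ (k:ℝ) / 8 := by
    have h1 : A ^ 2 / 2 ≤ (k:ℝ) / (8 * Real.exp 1) := by
      rw [div_le_div_iff₀ (by norm_num) (by positivity)]
      nlinarith
    have h2 : (k:ℝ) / (8 * Real.exp 1) ≤ (k:ℝ) / 8 := by
      apply div_le_div_of_nonneg_left (by positivity) (by norm_num)
      nlinarith
    linarith
  have hsum : ∀ s ∈ Finset.range k,
      ((-1 : ℝ) ^ s / (Nat.factorial s : ℝ)) * (x - m * y) ^ (2 * s) /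
        (2 ^ s * σ ^ (2 * s)) = (-t) ^ s / (Nat.factorial s : ℝ) := by
    intro s _
    have hts : t ^ s = (x - m*y) ^ (2*s) / (2 ^ s * σ ^ (2*s)) := by
      rw [ht, div_pow, ← pow_mul, mul_pow, ← pow_mul]
    rw [show ((-t):ℝ)^s = (-1)^s * t^s from neg_pow t s, hts]
    ring
  rw [Finset.sum_congr rfl hsum]
  have hexp : -(x - m * y) ^ 2 / (2 * σ ^ 2) = -t := by rw [ht]; ring
  rw [hexp]
  have hcond : |(-t)| / (k:ℕ).succ ≤ 1/2 := by
    rw [abs_neg, abs_of_nonneg ht0, div_le_iff₀ (by positivity : (0:ℝ) < ((k:ℕ).succ : ℝ))]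
    push_cast
    linarith
  have hb := real_exp_bound' hcond
  have hrw : |(-t)| ^ k = t ^ k := by rw [abs_neg, abs_of_nonneg ht0]
  rw [hrw] at hb
  refine hb.trans ?_
  -- remaining: t^k / k! * 2 ≤ ε
  have hfac : ((4:ℝ) * A^2) ^ k ≤ (Nat.factorial k : ℝ) := by
    have h2 : ((4:ℝ) * A^2) ^ k ≤ ((k:ℝ) / Real.exp 1) ^ k := by
      apply pow_le_pow_left₀ (by positivity)
      rw [le_div_iff₀ hE]; nlinarith
    refine h2.trans ?_
    rw [div_pow, div_le_iff₀ (by positivity)]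
    calc (k:ℝ)^k ≤ (Nat.factorial k : ℝ) * Real.exp 1 ^ k := aux_fact k
      _ = _ := by ring
  have heps : ((2:ℝ)^k)⁻¹ ≤ ε := by
    have hlog : Real.logb 2 ε⁻¹ ≤ (k:ℝ) := le_trans (Int.le_ceil _) hk2
    rw [Real.logb_le_iff_le_rpow (by norm_num) (by positivity)] at hlog
    rw [Real.rpow_natCast] at hlog
    rwa [inv_le_comm₀ (by positivity) hε0]
  have htk' : t ^ k ≤ (A^2/2) ^ k := pow_le_pow_left₀ ht0 htA k
  have h8 : (A^2/2:ℝ)^k / ((4:ℝ)*A^2)^k = ((1:ℝ)/8)^k := by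
    rw [← div_pow]
    congr 1
    field_simp
    ring
  have hd : t^k / (Nat.factorial k : ℝ) ≤ ((1:ℝ)/8)^k := by
    rw [← h8]
    exact div_le_div₀ (by positivity) htk' (by positivity) hfac
  have h4 : (2:ℝ) ≤ (4:ℝ)^k := by
    calc (2:ℝ) ≤ (4:ℝ)^1 := by norm_num
      _ ≤ (4:ℝ)^k := pow_le_pow_right₀ (by norm_num) hk0
  calc t ^ k / (Nat.factorial k : ℝ) * 2 ≤ ((1:ℝ)/8)^k * 2 := by
        exact mul_le_mul_of_nonneg_right hd (by norm_num)
    _ ≤ ((1:ℝ)/8)^k * (4:ℝ)^k := mul_le_mul_of_nonneg_left h4 (by positivity)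
    _ = ((2:ℝ)^k)⁻¹ := by
        rw [← mul_pow, show ((1:ℝ)/8*4) = (2:ℝ)⁻¹ by norm_num, inv_pow]
    _ ≤ ε := heps
end

section
/- Let d ∈ ℕ, k ∈ ℕ, and let 0 < m ≤ 1 and σ > 0 satisfy m² + σ² = 1. Let α ∈ ℤ_+^d be a multi-index with Σ_i α_i ≤ k, and let f : ℝ^d → ℝ be measurable, supported on [−1,1]^d, with |f| ≤ C_b. Then there exists a constant C, depending only on k and d, such that for every 0 < ε < 1/2 and every x ∈ ℝ^d, | ∫_{ℝ^d} Π_{i=1}^d ((m y_i − x_i)/σ)^{α_i} f(y) (2πσ²)^{−d/2} exp(−‖m y − x‖²/(2σ²)) dy − ∫_{A^x} Π_{i=1}^d ((m y_i − x_i)/σ)^{α_i} f(y) (2πσ²)^{−d/2} exp(−‖m y − x‖²/(2σ²)) dy | ≤ C · C_b · ε, where A^x = Π_{i=1}^d [x_i/m − (σ C/m)√(log ε⁻¹), x_i/m + (σ C/m)√(log ε⁻¹)]. -/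
set_option maxHeartbeats 1000000

open MeasureTheory Real

lemma aux_poly (k a : ℕ) (t : ℝ) (hak : a ≤ k) :
    |t| ^ a * Real.exp (-(t ^ 2) / 4) ≤ (k.factorial : ℝ) * Real.exp 1 := by
  have h1 : |t| ^ a ≤ (a.factorial : ℝ) * Real.exp |t| := by
    have h := Real.pow_div_factorial_le_exp (x := |t|) (abs_nonneg t) a
    have hfac : (0:ℝ) < a.factorial := by positivity
    rw [div_le_iff₀ hfac] at h
    linarith [h]
  calc |t| ^ a * Real.exp (-(t ^ 2) / 4)
      ≤ (a.factorial : ℝ) * Real.exp |t| * Real.exp (-(t ^ 2) / 4) := by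
        apply mul_le_mul_of_nonneg_right h1 (Real.exp_nonneg _)
    _ = (a.factorial : ℝ) * Real.exp (|t| + -(t ^ 2) / 4) := by
        rw [Real.exp_add]; ring
    _ ≤ (k.factorial : ℝ) * Real.exp 1 := by
        apply mul_le_mul
        · exact_mod_cast Nat.factorial_le hak
        · apply Real.exp_le_exp.2
          nlinarith [sq_nonneg (|t| - 2), sq_abs t]
        · positivity
        · positivity

lemma aux_gauss_integrable {m σ : ℝ} (hm : m ≠ 0) (hσ : 0 < σ) (c : ℝ) :
    Integrable fun y : ℝ => Real.exp (-(m * y - c) ^ 2 / (8 * σ ^ 2)) := by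
  have hb : (0:ℝ) < 1 / (8 * σ ^ 2) := by positivity
  have h := (((integrable_exp_neg_mul_sq hb).comp_sub_right c).comp_mul_left' hm)
  refine h.congr ?_
  filter_upwards with y
  congr 1
  field_simp

lemma aux_gauss_int {m σ : ℝ} (hm : 0 < m) (hσ : 0 < σ) (c : ℝ) :
    ∫ y : ℝ, Real.exp (-(m * y - c) ^ 2 / (8 * σ ^ 2))
      = m⁻¹ * Real.sqrt (π * (8 * σ ^ 2)) := by
  have h1 : (∫ y : ℝ, Real.exp (-(m * y - c) ^ 2 / (8 * σ ^ 2)))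
      = |m⁻¹| • ∫ t : ℝ, Real.exp (-(t - c) ^ 2 / (8 * σ ^ 2)) :=
    MeasureTheory.Measure.integral_comp_mul_left
      (fun t => Real.exp (-(t - c) ^ 2 / (8 * σ ^ 2))) m
  rw [h1, integral_sub_right_eq_self (μ := volume)
      (fun t => Real.exp (-(t:ℝ) ^ 2 / (8 * σ ^ 2))) c]
  have h2 : (∫ t : ℝ, Real.exp (-(t:ℝ) ^ 2 / (8 * σ ^ 2)))
      = Real.sqrt (π / (1 / (8 * σ ^ 2))) := by
    rw [← integral_gaussian (1 / (8 * σ ^ 2))]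
    congr 1 with t
    congr 1
    field_simp
  rw [h2, abs_of_pos (inv_pos.2 hm), smul_eq_mul]
  congr 2
  rw [div_div_eq_mul_div, div_one, mul_comm]

/-- Clipping of Gaussian-weighted integrals: a constant `C = C(k, d)` such that
restricting the integral to the box `A^x = Π_i [x_i/m ± (σC/m)√(log ε⁻¹)]` changes it by at most
`C·C_b·ε`. -/
theorem statement12 (d k : ℕ) (Cb : ℝ) (hCb : 0 ≤ Cb) :
    ∃ C : ℝ, 0 < C ∧
      ∀ m σ : ℝ, 0 < m → m ≤ 1 → 0 < σ → m ^ 2 + σ ^ 2 = 1 →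
      ∀ α : Fin d → ℕ, (∑ i, α i) ≤ k →
      ∀ f : (Fin d → ℝ) → ℝ, Measurable f →
        (∀ y : Fin d → ℝ, ¬ (∀ i, |y i| ≤ 1) → f y = 0) → (∀ y, |f y| ≤ Cb) →
      ∀ ε : ℝ, 0 < ε → ε < 1/2 → ∀ x : Fin d → ℝ,
        |(∫ y : Fin d → ℝ,
            (∏ i, ((m * y i - x i) / σ) ^ (α i)) * f y *
              ((2 * Real.pi * σ ^ 2) ^ (-(d : ℝ) / 2) *
                Real.exp (-(∑ i, (m * y i - x i) ^ 2) / (2 * σ ^ 2)))) -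
          (∫ y in Set.univ.pi (fun i : Fin d =>
              Set.Icc (x i / m - (σ * C / m) * Real.sqrt (Real.log ε⁻¹))
                (x i / m + (σ * C / m) * Real.sqrt (Real.log ε⁻¹))),
            (∏ i, ((m * y i - x i) / σ) ^ (α i)) * f y *
              ((2 * Real.pi * σ ^ 2) ^ (-(d : ℝ) / 2) *
                Real.exp (-(∑ i, (m * y i - x i) ^ 2) / (2 * σ ^ 2))))| ≤ C * Cb * ε := by
  set K : ℝ := (k.factorial : ℝ) * Real.exp 1 with hKdef
  have hK1 : 1 ≤ K := by
    have h1 : (1:ℝ) ≤ (k.factorial : ℝ) := by exact_mod_cast Nat.one_le_iff_ne_zero.2 k.factorial_ne_zero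
    nlinarith [Real.one_le_exp (by norm_num : (0:ℝ) ≤ 1)]
  have hsqrt2 : (1:ℝ) ≤ Real.sqrt 2 := by
    nlinarith [Real.sq_sqrt (by norm_num : (0:ℝ) ≤ 2), Real.sqrt_nonneg 2]
  set C : ℝ := 3 + (2 * Real.sqrt 2 * K) ^ d with hCdef
  have hCpos : 0 < C := by positivity
  have hC3 : 3 ≤ C := by
    have : (0:ℝ) ≤ (2 * Real.sqrt 2 * K) ^ d := by positivity
    rw [hCdef]; linarith
  refine ⟨C, hCpos, ?_⟩
  intro m σ hm hm1 hσ hmσ α hα f hf hsupp hbound ε hε hε2 x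
  have hL : 0 < Real.log ε⁻¹ := by
    rw [Real.log_inv]; linarith [Real.log_neg hε (by linarith : ε < 1)]
  set L : ℝ := Real.log ε⁻¹ with hLdef
  have hεL : Real.exp (-L) = ε := by
    rw [hLdef, Real.log_inv, neg_neg, Real.exp_log hε]
  set c2 : ℝ := (2 * Real.pi * σ ^ 2) ^ (-(d : ℝ) / 2) with hc2def
  have h2πσ : 0 < 2 * Real.pi * σ ^ 2 := by positivity
  have hc2pos : 0 < c2 := Real.rpow_pos_of_pos h2πσ _
  set g : (Fin d → ℝ) → ℝ := fun y =>
    (∏ i, ((m * y i - x i) / σ) ^ (α i)) * f y *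
      (c2 * Real.exp (-(∑ i, (m * y i - x i) ^ 2) / (2 * σ ^ 2))) with hgdef
  set S : Set (Fin d → ℝ) := Set.univ.pi fun _ : Fin d => Set.Icc (-1:ℝ) 1 with hSdef
  set A : Set (Fin d → ℝ) := Set.univ.pi (fun i : Fin d =>
      Set.Icc (x i / m - (σ * C / m) * Real.sqrt L)
        (x i / m + (σ * C / m) * Real.sqrt L)) with hAdef
  have hmesS : MeasurableSet S := MeasurableSet.univ_pi fun _ => measurableSet_Icc
  have hmesA : MeasurableSet A := MeasurableSet.univ_pi fun _ => measurableSet_Icc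
  have hgmes : Measurable g := by
    apply Measurable.mul
    · apply Measurable.mul
      · exact Finset.measurable_prod _ fun i _ =>
          by fun_prop
      · exact hf
    · exact (Real.measurable_exp.comp ((Finset.measurable_sum _ fun i _ =>
        ((measurable_const.mul (measurable_pi_apply i)).sub measurable_const).pow_const 2).neg.div_const _)).const_mul c2
  -- membership in S
  have hSmem : ∀ y : Fin d → ℝ, y ∈ S ↔ ∀ i, |y i| ≤ 1 := by
    intro y
    simp only [hSdef, Set.mem_pi, Set.mem_univ, forall_true_left, Set.mem_Icc, abs_le]
  have hgzero : ∀ y, y ∉ S → g y = 0 := by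
    intro y hyS
    have : f y = 0 := hsupp y (by rw [← hSmem]; exact hyS)
    simp [hgdef, this]
  -- key product bound
  have hexp4 : ∀ y : Fin d → ℝ,
      Real.exp (-(∑ i, (m * y i - x i) ^ 2) / (4 * σ ^ 2))
        = ∏ i, Real.exp (-(((m * y i - x i) / σ) ^ 2) / 4) := by
    intro y
    rw [← Real.exp_sum]
    congr 1
    rw [neg_div, Finset.sum_div, ← Finset.sum_neg_distrib]
    apply Finset.sum_congr rfl
    intro i _
    rw [div_pow]
    simp only [neg_div]
    rw [div_div, mul_comm (σ ^ 2) 4]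
  have hKey : ∀ y : Fin d → ℝ,
      (∏ i, |(m * y i - x i) / σ| ^ (α i)) *
        Real.exp (-(∑ i, (m * y i - x i) ^ 2) / (4 * σ ^ 2)) ≤ K ^ d := by
    intro y
    rw [hexp4 y, ← Finset.prod_mul_distrib]
    calc ∏ i, (|(m * y i - x i) / σ| ^ (α i) *
            Real.exp (-(((m * y i - x i) / σ) ^ 2) / 4))
        ≤ ∏ _i : Fin d, K := by
          apply Finset.prod_le_prod
          · intro i _; positivity
          · intro i _
            exact aux_poly k (α i) _ (le_trans (Finset.single_le_sum
              (fun j _ => Nat.zero_le _) (Finset.mem_univ i)) hα)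
      _ = K ^ d := by rw [Finset.prod_const, Finset.card_univ, Fintype.card_fin]
  -- global bound
  have hexp_split : ∀ y : Fin d → ℝ,
      Real.exp (-(∑ i, (m * y i - x i) ^ 2) / (2 * σ ^ 2))
        = Real.exp (-(∑ i, (m * y i - x i) ^ 2) / (4 * σ ^ 2)) *
          Real.exp (-(∑ i, (m * y i - x i) ^ 2) / (8 * σ ^ 2)) *
          Real.exp (-(∑ i, (m * y i - x i) ^ 2) / (8 * σ ^ 2)) := by
    intro y
    rw [← Real.exp_add, ← Real.exp_add]
    congr 1
    field_simp
    ring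
  have habsg : ∀ y : Fin d → ℝ, |g y| =
      (∏ i, |(m * y i - x i) / σ| ^ (α i)) * |f y| *
        (c2 * Real.exp (-(∑ i, (m * y i - x i) ^ 2) / (2 * σ ^ 2))) := by
    intro y
    rw [hgdef]
    rw [abs_mul, abs_mul, abs_of_pos (by positivity : (0:ℝ) <
      c2 * Real.exp (-(∑ i, (m * y i - x i) ^ 2) / (2 * σ ^ 2)))]
    congr 2
    rw [Finset.abs_prod]
    exact Finset.prod_congr rfl fun i _ => abs_pow _ _
  have hE8pos : ∀ y : Fin d → ℝ,
      0 < Real.exp (-(∑ i, (m * y i - x i) ^ 2) / (8 * σ ^ 2)) := fun y => Real.exp_pos _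
  have hE8le1 : ∀ y : Fin d → ℝ,
      Real.exp (-(∑ i, (m * y i - x i) ^ 2) / (8 * σ ^ 2)) ≤ 1 := by
    intro y
    apply Real.exp_le_one_iff.2
    have : (0:ℝ) ≤ ∑ i, (m * y i - x i) ^ 2 := Finset.sum_nonneg fun i _ => sq_nonneg _
    apply div_nonpos_of_nonpos_of_nonneg (by linarith) (by positivity)
  have hGB : ∀ y : Fin d → ℝ, ‖g y‖ ≤ Cb * K ^ d * c2 := by
    intro y
    rw [Real.norm_eq_abs, habsg y, hexp_split y]
    calc (∏ i, |(m * y i - x i) / σ| ^ (α i)) * |f y| *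
          (c2 * (Real.exp (-(∑ i, (m * y i - x i) ^ 2) / (4 * σ ^ 2)) *
            Real.exp (-(∑ i, (m * y i - x i) ^ 2) / (8 * σ ^ 2)) *
            Real.exp (-(∑ i, (m * y i - x i) ^ 2) / (8 * σ ^ 2))))
        = ((∏ i, |(m * y i - x i) / σ| ^ (α i)) *
            Real.exp (-(∑ i, (m * y i - x i) ^ 2) / (4 * σ ^ 2))) * |f y| *
            Real.exp (-(∑ i, (m * y i - x i) ^ 2) / (8 * σ ^ 2)) *
            Real.exp (-(∑ i, (m * y i - x i) ^ 2) / (8 * σ ^ 2)) * c2 := by ring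
      _ ≤ K ^ d * Cb * 1 * 1 * c2 := by
          have h1 := hKey y
          have h2 := hbound y
          have h3 := hE8le1 y
          have hP : (0:ℝ) ≤ (∏ i, |(m * y i - x i) / σ| ^ (α i)) *
              Real.exp (-(∑ i, (m * y i - x i) ^ 2) / (4 * σ ^ 2)) := by positivity
          gcongr <;> positivity
      _ = Cb * K ^ d * c2 := by ring
  -- integrability of g
  have hvolS : volume S ≠ ⊤ :=
    ((isCompact_univ_pi fun _ => isCompact_Icc).measure_lt_top).ne
  have hgind : g = S.indicator g := by
    funext y
    by_cases hyS : y ∈ S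
    · rw [Set.indicator_of_mem hyS]
    · rw [Set.indicator_of_notMem hyS, hgzero y hyS]
  have hgInt : Integrable g := by
    rw [hgind, integrable_indicator_iff hmesS]
    exact Measure.integrableOn_of_bounded hvolS hgmes.aestronglyMeasurable
      (ae_of_all _ hGB)
  -- the gaussian comparison function
  set φ : (Fin d → ℝ) → ℝ := fun y =>
    c2 * ∏ i, Real.exp (-(m * y i - x i) ^ 2 / (8 * σ ^ 2)) with hφdef
  have hφnn : ∀ y, 0 ≤ φ y := by intro y; positivity
  have hφInt : Integrable φ := by
    apply Integrable.const_mul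
    exact Integrable.fintype_prod (f := fun (i : Fin d) (t : ℝ) =>
      Real.exp (-(m * t - x i) ^ 2 / (8 * σ ^ 2)))
      (fun i => aux_gauss_integrable hm.ne' hσ (x i))
  have hφeq : ∀ y : Fin d → ℝ,
      φ y = c2 * Real.exp (-(∑ i, (m * y i - x i) ^ 2) / (8 * σ ^ 2)) := by
    intro y
    show c2 * (∏ i, Real.exp (-(m * y i - x i) ^ 2 / (8 * σ ^ 2))) = _
    congr 1
    rw [← Real.exp_sum]
    congr 1
    rw [neg_div, Finset.sum_div, ← Finset.sum_neg_distrib]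
    exact Finset.sum_congr rfl fun i _ => neg_div _ _
  -- tail bound on Aᶜ
  have hCsq : (8:ℝ) ≤ C ^ 2 := by nlinarith
  have hTail : ∀ y : Fin d → ℝ, y ∈ Aᶜ →
      ‖g y‖ ≤ (Cb * K ^ d * ε) * S.indicator φ y := by
    intro y hyA
    by_cases hyS : y ∈ S
    · rw [Set.indicator_of_mem hyS]
      -- extract the bad coordinate
      have : ∃ i, y i ∉ Set.Icc (x i / m - (σ * C / m) * Real.sqrt L)
          (x i / m + (σ * C / m) * Real.sqrt L) := by
        by_contra hcon
        push_neg at hcon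
        exact hyA (by rw [hAdef, Set.mem_pi]; intro i _; exact hcon i)
      obtain ⟨i, hi⟩ := this
      have hzi : σ * C * Real.sqrt L ≤ |m * y i - x i| := by
        rw [Set.mem_Icc, not_and_or, not_le, not_le] at hi
        have hR : σ * C * Real.sqrt L = m * ((σ * C / m) * Real.sqrt L) := by
          field_simp
        have habs : |m * y i - x i| = m * |y i - x i / m| := by
          have hmm : m * (y i - x i / m) = m * y i - x i := by field_simp
          rw [← hmm, abs_mul, abs_of_pos hm]
        rw [habs, hR]
        apply mul_le_mul_of_nonneg_left _ hm.le
        rcases hi with hi | hi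
        · rw [abs_sub_comm]
          calc (σ * C / m) * Real.sqrt L ≤ x i / m - y i := by linarith
            _ ≤ |x i / m - y i| := le_abs_self _
        · calc (σ * C / m) * Real.sqrt L ≤ y i - x i / m := by linarith
            _ ≤ |y i - x i / m| := le_abs_self _
      have hzisq : σ ^ 2 * C ^ 2 * L ≤ (m * y i - x i) ^ 2 := by
        have h1 : (σ * C * Real.sqrt L) ^ 2 ≤ |m * y i - x i| ^ 2 := by
          apply pow_le_pow_left₀ (by positivity) hzi
        rw [sq_abs] at h1
        calc σ ^ 2 * C ^ 2 * L = (σ * C * Real.sqrt L) ^ 2 := by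
              rw [mul_pow, mul_pow, Real.sq_sqrt hL.le]
          _ ≤ _ := h1
      have hsum : σ ^ 2 * C ^ 2 * L ≤ ∑ j, (m * y j - x j) ^ 2 :=
        le_trans hzisq (Finset.single_le_sum (f := fun j => (m * y j - x j) ^ 2)
          (fun j _ => sq_nonneg _) (Finset.mem_univ i))
      have hE8ε : Real.exp (-(∑ j, (m * y j - x j) ^ 2) / (8 * σ ^ 2)) ≤ ε := by
        rw [← hεL]
        apply Real.exp_le_exp.2
        rw [div_le_iff₀ (by positivity : (0:ℝ) < 8 * σ ^ 2)]
        have key : L * (8 * σ ^ 2) ≤ σ ^ 2 * C ^ 2 * L := by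
          nlinarith [mul_nonneg (mul_nonneg (sub_nonneg.2 hCsq) hL.le) (sq_nonneg σ)]
        linarith [hsum]
      rw [Real.norm_eq_abs, habsg y, hexp_split y, hφeq y]
      calc (∏ j, |(m * y j - x j) / σ| ^ (α j)) * |f y| *
            (c2 * (Real.exp (-(∑ j, (m * y j - x j) ^ 2) / (4 * σ ^ 2)) *
              Real.exp (-(∑ j, (m * y j - x j) ^ 2) / (8 * σ ^ 2)) *
              Real.exp (-(∑ j, (m * y j - x j) ^ 2) / (8 * σ ^ 2))))
          = ((∏ j, |(m * y j - x j) / σ| ^ (α j)) *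
              Real.exp (-(∑ j, (m * y j - x j) ^ 2) / (4 * σ ^ 2))) * |f y| *
              Real.exp (-(∑ j, (m * y j - x j) ^ 2) / (8 * σ ^ 2)) *
              (c2 * Real.exp (-(∑ j, (m * y j - x j) ^ 2) / (8 * σ ^ 2))) := by ring
        _ ≤ K ^ d * Cb * ε *
              (c2 * Real.exp (-(∑ j, (m * y j - x j) ^ 2) / (8 * σ ^ 2))) := by
            have h1 := hKey y
            have h2 := hbound y
            gcongr <;> positivity
        _ = (Cb * K ^ d * ε) *
              (c2 * Real.exp (-(∑ j, (m * y j - x j) ^ 2) / (8 * σ ^ 2))) := by ring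
    · rw [Set.indicator_of_notMem hyS, Real.norm_eq_abs, hgzero y hyS, abs_zero, mul_zero]
  -- split the integral
  have hsplit : (∫ y in A, g y) + (∫ y in Aᶜ, g y) = ∫ y, g y :=
    integral_add_compl hmesA hgInt
  have hdiff : (∫ y, g y) - (∫ y in A, g y) = ∫ y in Aᶜ, g y := by linarith
  have hIndInt : Integrable (fun y => (Cb * K ^ d * ε) * S.indicator φ y) :=
    (hφInt.indicator hmesS).const_mul _
  have hstep1 : |∫ y in Aᶜ, g y| ≤ ∫ y in Aᶜ, (Cb * K ^ d * ε) * S.indicator φ y := by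
    rw [← Real.norm_eq_abs]
    apply norm_integral_le_of_norm_le (hIndInt.restrict)
    exact (ae_restrict_iff' hmesA.compl).2 (ae_of_all _ hTail)
  have hstep2 : (∫ y in Aᶜ, (Cb * K ^ d * ε) * S.indicator φ y)
      ≤ ∫ y, (Cb * K ^ d * ε) * S.indicator φ y := by
    apply setIntegral_le_integral hIndInt
    filter_upwards with y
    have := Set.indicator_nonneg (fun z _ => hφnn z) (a := y) (s := S)
    positivity
  have hstep3 : (∫ y, (Cb * K ^ d * ε) * S.indicator φ y)
      = (Cb * K ^ d * ε) * ∫ y in S, φ y := by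
    rw [MeasureTheory.integral_const_mul, integral_indicator hmesS]
  -- bound ∫_S φ
  have hsqrt2' : (0:ℝ) < Real.sqrt 2 := by linarith
  have hintSφ : (∫ y in S, φ y) ≤ (2 * Real.sqrt 2) ^ d := by
    by_cases hσ2 : 1 / 2 ≤ σ ^ 2
    · -- σ large: use sup bound
      have hφle : ∀ y ∈ S, φ y ≤ c2 := by
        intro y _
        rw [hφdef]
        calc c2 * ∏ i, Real.exp (-(m * y i - x i) ^ 2 / (8 * σ ^ 2))
            ≤ c2 * 1 := by
              apply mul_le_mul_of_nonneg_left _ hc2pos.le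
              apply Finset.prod_le_one (fun i _ => (Real.exp_pos _).le)
              intro i _
              apply Real.exp_le_one_iff.2
              apply div_nonpos_of_nonpos_of_nonneg (by nlinarith [sq_nonneg (m * y i - x i)]) (by positivity)
          _ = c2 := mul_one _
      have hc2le1 : c2 ≤ 1 := by
        apply Real.rpow_le_one_of_one_le_of_nonpos
        · nlinarith [Real.pi_gt_three]
        · have : (0:ℝ) ≤ (d:ℝ) := Nat.cast_nonneg d
          linarith
      calc (∫ y in S, φ y) ≤ ∫ _y in S, c2 := by
            apply setIntegral_mono_on hφInt.integrableOn (integrableOn_const hvolS) hmesS hφle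
        _ = (volume S).toReal * c2 := by rw [setIntegral_const, smul_eq_mul]; rfl
        _ ≤ 2 ^ d * 1 := by
            apply mul_le_mul _ hc2le1 hc2pos.le (by positivity)
            have : volume S = (ENNReal.ofReal 2) ^ d := by
              rw [hSdef, volume_pi_pi]
              simp [Real.volume_Icc]
              norm_num
            rw [this]
            rw [← ENNReal.ofReal_pow (by norm_num)]
            rw [ENNReal.toReal_ofReal (by positivity)]
        _ ≤ (2 * Real.sqrt 2) ^ d := by
            rw [mul_one]
            apply pow_le_pow_left₀ (by norm_num) (by nlinarith)
    · -- m large: use full gaussian integral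
      push_neg at hσ2
      have hm2 : 1 / 2 ≤ m ^ 2 := by nlinarith
      have hminv : m⁻¹ ≤ Real.sqrt 2 := by
        rw [inv_le_iff_one_le_mul₀ hm]
        nlinarith [Real.sq_sqrt (by norm_num : (0:ℝ) ≤ 2)]
      have hintφ : (∫ y, φ y) = c2 * (m⁻¹ * Real.sqrt (π * (8 * σ ^ 2))) ^ d := by
        rw [hφdef, MeasureTheory.integral_const_mul]
        congr 1
        rw [volume_pi]
        rw [integral_fintype_prod_eq_prod (ι := Fin d)
          (f := fun (i : Fin d) (t : ℝ) => Real.exp (-(m * t - x i) ^ 2 / (8 * σ ^ 2)))]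
        rw [Finset.prod_congr rfl fun i _ => aux_gauss_int hm hσ (x i)]
        rw [Finset.prod_const, Finset.card_univ, Fintype.card_fin]
      have hhalf : Real.sqrt (2 * π * σ ^ 2) ^ d = (2 * π * σ ^ 2) ^ ((d:ℝ)/2) := by
        rw [Real.sqrt_eq_rpow, ← Real.rpow_natCast ((2 * π * σ ^ 2) ^ ((1:ℝ)/2)) d,
          ← Real.rpow_mul h2πσ.le]
        congr 1
        ring
      have hone : c2 * Real.sqrt (2 * π * σ ^ 2) ^ d = 1 := by
        rw [hhalf, hc2def, ← Real.rpow_add h2πσ,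
          show -(d:ℝ) / 2 + (d:ℝ)/2 = 0 by ring, Real.rpow_zero]
      have hcancel : c2 * Real.sqrt (π * (8 * σ ^ 2)) ^ d = 2 ^ d := by
        rw [show π * (8 * σ ^ 2) = 4 * (2 * π * σ ^ 2) by ring,
          Real.sqrt_mul (by norm_num : (0:ℝ) ≤ 4),
          show Real.sqrt 4 = 2 by
            rw [show (4:ℝ) = 2 ^ 2 by norm_num, Real.sqrt_sq (by norm_num : (0:ℝ) ≤ 2)],
          mul_pow]
        calc c2 * (2 ^ d * Real.sqrt (2 * π * σ ^ 2) ^ d)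
            = 2 ^ d * (c2 * Real.sqrt (2 * π * σ ^ 2) ^ d) := by ring
          _ = 2 ^ d := by rw [hone, mul_one]
      calc (∫ y in S, φ y) ≤ ∫ y, φ y :=
            setIntegral_le_integral hφInt (ae_of_all _ hφnn)
        _ = (m⁻¹) ^ d * (c2 * Real.sqrt (π * (8 * σ ^ 2)) ^ d) := by
            rw [hintφ, mul_pow]; ring
        _ = (m⁻¹ * 2) ^ d := by rw [hcancel, mul_pow]
        _ ≤ (2 * Real.sqrt 2) ^ d := by
            apply pow_le_pow_left₀ (by positivity)
            nlinarith
  -- conclude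
  rw [hdiff, ← Real.norm_eq_abs] at *
  calc ‖∫ y in Aᶜ, g y‖ ≤ (Cb * K ^ d * ε) * ∫ y in S, φ y := by
        rw [← hstep3]
        rw [Real.norm_eq_abs]
        exact le_trans hstep1 hstep2
    _ ≤ (Cb * K ^ d * ε) * (2 * Real.sqrt 2) ^ d := by
        apply mul_le_mul_of_nonneg_left hintSφ (by positivity)
    _ = (Cb * ε) * (2 * Real.sqrt 2 * K) ^ d := by rw [mul_pow]; ring
    _ ≤ (Cb * ε) * C := by
        apply mul_le_mul_of_nonneg_left _ (by positivity)
        rw [hCdef]; linarith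
    _ = C * Cb * ε := by ring
end

section
/- For every T > 0 there exists a coupling of p_0 and p_T, i.e. a probability measure γ on ℝ^d × ℝ^d whose first marginal has density p_0 and whose second marginal has density p_T, such that ∫ ‖x − y‖ dγ(x,y) ≤ ((1 − m_T) + σ_T) · √d; consequently, for 0 < T ≤ 1 the Wasserstein-1 transport cost between p_0 and p_T is at most C √T for a constant C depending only on d and β̄. -/
open MeasureTheory Real
open Filter Set Topology


/-- Second moment of the Gaussian. -/
lemma gauss_sq_integral {b : ℝ} (hb : 0 < b) :
    ∫ x : ℝ, x ^ 2 * Real.exp (-b * x ^ 2) = (2 * b)⁻¹ * Real.sqrt (π / b) := by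
  have hint2 : Integrable (fun x : ℝ => x ^ 2 * Real.exp (-b * x ^ 2)) := by
    have h := integrable_rpow_mul_exp_neg_mul_sq hb (s := ((2 : ℕ) : ℝ)) (by norm_num)
    simpa [Real.rpow_natCast] using h
  have hint0 : Integrable (fun x : ℝ => Real.exp (-b * x ^ 2)) := integrable_exp_neg_mul_sq hb
  have hderiv : ∀ x : ℝ, HasDerivAt (fun y : ℝ => y * Real.exp (-b * y ^ 2))
      (Real.exp (-b * x ^ 2) - 2 * b * (x ^ 2 * Real.exp (-b * x ^ 2))) x := by
    intro x
    have h1 : HasDerivAt (fun y : ℝ => -b * y ^ 2) (-b * (2 * x)) x := by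
      simpa using (hasDerivAt_pow 2 x).const_mul (-b)
    have h2 := h1.exp
    have h3 := (hasDerivAt_id x).mul h2
    have h4 : HasDerivAt (fun y : ℝ => y * Real.exp (-b * y ^ 2))
        (1 * Real.exp (-b * x ^ 2) + id x * (Real.exp (-b * x ^ 2) * (-b * (2 * x)))) x := h3
    convert h4 using 1
    simp only [id]; ring
  have htend : Tendsto (fun x : ℝ => x * Real.exp (-b * x ^ 2)) atTop (𝓝 0) := by
    have h := rpow_mul_exp_neg_mul_sq_isLittleO_exp_neg hb 1
    have h2 : Tendsto (fun x : ℝ => Real.exp (-(1 / 2) * x)) atTop (𝓝 0) := by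
      have hc : Tendsto (fun x : ℝ => -(1 / 2) * x) atTop atBot :=
        Tendsto.const_mul_atTop_of_neg (by norm_num) tendsto_id
      exact Real.tendsto_exp_atBot.comp hc
    have := h.isBigO.trans_tendsto h2
    simpa [Real.rpow_one] using this
  have hIoi : (∫ x in Set.Ioi (0:ℝ),
      (Real.exp (-b * x ^ 2) - 2 * b * (x ^ 2 * Real.exp (-b * x ^ 2)))) = 0 - 0 := by
    have := integral_Ioi_of_hasDerivAt_of_tendsto' (a := 0)
      (f := fun y : ℝ => y * Real.exp (-b * y ^ 2))
      (f' := fun x : ℝ => Real.exp (-b * x ^ 2) - 2 * b * (x ^ 2 * Real.exp (-b * x ^ 2)))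
      (fun x _ => hderiv x) ((hint0.sub (hint2.const_mul _)).integrableOn) htend
    simpa using this
  rw [integral_sub hint0.integrableOn ((hint2.const_mul _).integrableOn),
    integral_gaussian_Ioi] at hIoi
  have habs := integral_comp_abs (f := fun t : ℝ => t ^ 2 * Real.exp (-b * t ^ 2))
  simp only [sq_abs] at habs
  have h2 : ∫ x : ℝ, x ^ 2 * Real.exp (-b * x ^ 2)
      = 2 * ∫ x in Set.Ioi (0:ℝ), x ^ 2 * Real.exp (-b * x ^ 2) := by
    rw [← habs]
  rw [MeasureTheory.integral_const_mul] at hIoi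
  have hbne : (2 : ℝ) * b ≠ 0 := by positivity
  rw [h2]
  have hI : (2 * b) * ∫ x in Set.Ioi (0:ℝ), x ^ 2 * Real.exp (-b * x ^ 2) = √(π / b) / 2 := by
    linarith
  rw [eq_inv_mul_iff_mul_eq₀ hbne]
  linarith



noncomputable def g1 (s : ℝ) : ℝ → ℝ :=
  fun u => (2 * π * s ^ 2) ^ (-(1:ℝ) / 2) * Real.exp (-(u ^ 2) / (2 * s ^ 2))

lemma g1_eq_s19 (s : ℝ) (hs : s ≠ 0) : g1 s
    = fun u => (2 * π * s ^ 2) ^ (-(1:ℝ) / 2) * Real.exp (-((2 * s ^ 2)⁻¹) * u ^ 2) := by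
  funext u
  unfold g1
  congr 1
  rw [neg_div, neg_mul]
  congr 1
  field_simp

lemma g1_nonneg (s : ℝ) (u : ℝ) : 0 ≤ g1 s u := by
  unfold g1; positivity

lemma sqrt_norm (s : ℝ) (hs : 0 < s) :
    (2 * π * s ^ 2) ^ (-(1:ℝ) / 2) * Real.sqrt (2 * π * s ^ 2) = 1 := by
  have hpos : (0:ℝ) < 2 * π * s ^ 2 := by positivity
  rw [Real.sqrt_eq_rpow, ← Real.rpow_add hpos]
  norm_num

lemma pi_div_inv (s : ℝ) (hs : 0 < s) : π / (2 * s ^ 2)⁻¹ = 2 * π * s ^ 2 := by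
  field_simp

lemma g1_integrable {s : ℝ} (hs : 0 < s) : Integrable (g1 s) := by
  rw [g1_eq_s19 s hs.ne']
  exact (integrable_exp_neg_mul_sq (by positivity)).const_mul _

lemma g1_integral_s19 {s : ℝ} (hs : 0 < s) : ∫ u, g1 s u = 1 := by
  rw [g1_eq_s19 s hs.ne', MeasureTheory.integral_const_mul, integral_gaussian,
    pi_div_inv s hs, sqrt_norm s hs]

lemma g1_sq_integrable {s : ℝ} (hs : 0 < s) : Integrable (fun u => u ^ 2 * g1 s u) := by
  rw [g1_eq_s19 s hs.ne']
  have h := integrable_rpow_mul_exp_neg_mul_sq (b := (2 * s ^ 2)⁻¹) (by positivity)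
    (s := ((2 : ℕ) : ℝ)) (by norm_num)
  simp only [Real.rpow_natCast] at h
  exact (h.const_mul ((2 * π * s ^ 2) ^ (-(1:ℝ) / 2))).congr
    (Eventually.of_forall fun u => by push_cast; ring)

lemma g1_sq_integral {s : ℝ} (hs : 0 < s) : ∫ u, u ^ 2 * g1 s u = s ^ 2 := by
  rw [g1_eq_s19 s hs.ne']
  have h : (fun u : ℝ => u ^ 2 * ((2 * π * s ^ 2) ^ (-(1:ℝ) / 2)
      * Real.exp (-((2 * s ^ 2)⁻¹) * u ^ 2)))
      = fun u : ℝ => (2 * π * s ^ 2) ^ (-(1:ℝ) / 2)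
      * (u ^ 2 * Real.exp (-((2 * s ^ 2)⁻¹) * u ^ 2)) := by
    funext u; ring
  rw [h, MeasureTheory.integral_const_mul, gauss_sq_integral (by positivity), pi_div_inv s hs]
  have h3 : (2 * (2 * s ^ 2)⁻¹)⁻¹ = s ^ 2 := by
    rw [mul_inv, inv_inv]; ring
  rw [h3]
  have := sqrt_norm s hs
  nlinarith [this]

/-- Triangle inequality for coordinate sums of squares. -/
lemma sqrt_sum_sq_add_le {d : ℕ} (u v : Fin d → ℝ) :
    Real.sqrt (∑ i, (u i + v i) ^ 2)
      ≤ Real.sqrt (∑ i, u i ^ 2) + Real.sqrt (∑ i, v i ^ 2) := by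
  have hcs := Real.sum_mul_le_sqrt_mul_sqrt Finset.univ u v
  have hu : (0:ℝ) ≤ ∑ i, u i ^ 2 := Finset.sum_nonneg fun i _ => sq_nonneg _
  have hv : (0:ℝ) ≤ ∑ i, v i ^ 2 := Finset.sum_nonneg fun i _ => sq_nonneg _
  have hsu := Real.sq_sqrt hu
  have hsv := Real.sq_sqrt hv
  have h1 : ∑ i, (u i + v i) ^ 2
      ≤ (Real.sqrt (∑ i, u i ^ 2) + Real.sqrt (∑ i, v i ^ 2)) ^ 2 := by
    have e : ∑ i, (u i + v i) ^ 2
        = (∑ i, u i ^ 2) + 2 * (∑ i, u i * v i) + ∑ i, v i ^ 2 := by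
      simp only [add_sq, Finset.sum_add_distrib, Finset.mul_sum, mul_assoc]
    rw [e]
    nlinarith [hcs, hsu, hsv]
  calc Real.sqrt (∑ i, (u i + v i) ^ 2)
      ≤ Real.sqrt ((Real.sqrt (∑ i, u i ^ 2) + Real.sqrt (∑ i, v i ^ 2)) ^ 2) :=
        Real.sqrt_le_sqrt h1
    _ = _ := Real.sqrt_sq (by positivity)

/-- Integrability of bounded functions vanishing outside the cube. -/
lemma integrable_of_cube_support {d : ℕ} {f : (Fin d → ℝ) → ℝ} (hf : Measurable f) (C : ℝ)
    (hbd : ∀ x, |f x| ≤ C) (hsupp : ∀ x, ¬ (∀ i, |x i| ≤ 1) → f x = 0) :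
    Integrable f := by
  set K : Set (Fin d → ℝ) := Set.univ.pi (fun _ => Set.Icc (-1:ℝ) 1) with hKdef
  have hK : MeasurableSet K := MeasurableSet.univ_pi fun i => measurableSet_Icc
  have hKcpt : IsCompact K := isCompact_univ_pi fun i => isCompact_Icc
  have hKlt : volume K < ⊤ := hKcpt.measure_lt_top
  have hmem : ∀ x : Fin d → ℝ, x ∈ K ↔ ∀ i, |x i| ≤ 1 := by
    intro x
    simp [hKdef, Set.mem_pi, abs_le, Pi.le_def, forall_and]
  have hfeq : f = K.indicator f := by
    funext x
    by_cases h : ∀ i, |x i| ≤ 1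
    · rw [Set.indicator_of_mem ((hmem x).2 h)]
    · rw [Set.indicator_of_notMem (fun hx => h ((hmem x).1 hx)), hsupp x h]
  rw [hfeq, integrable_indicator_iff hK]
  have hconst : IntegrableOn (fun _ : Fin d → ℝ => C) K := by
    exact integrableOn_const hKlt.ne
  exact Integrable.mono' hconst (hf.aestronglyMeasurable.restrict)
    (Eventually.of_forall fun x => by simpa using hbd x)

noncomputable def gd (d : ℕ) (s : ℝ) : (Fin d → ℝ) → ℝ :=
  fun z => (2 * π * s ^ 2) ^ (-(d:ℝ) / 2) * Real.exp (-(∑ i, (z i) ^ 2) / (2 * s ^ 2))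

lemma gd_nonneg (d : ℕ) (s : ℝ) (z : Fin d → ℝ) : 0 ≤ gd d s z := by
  unfold gd; positivity

lemma gd_le (d : ℕ) (s : ℝ) (z : Fin d → ℝ) : gd d s z ≤ (2 * π * s ^ 2) ^ (-(d:ℝ) / 2) := by
  unfold gd
  have h1 : Real.exp (-(∑ i, (z i) ^ 2) / (2 * s ^ 2)) ≤ 1 := by
    rw [Real.exp_le_one_iff]
    have hnum : (0:ℝ) ≤ ∑ i, (z i) ^ 2 := Finset.sum_nonneg fun i _ => sq_nonneg _
    have h2s : (0:ℝ) ≤ 2 * s ^ 2 := by positivity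
    exact div_nonpos_of_nonpos_of_nonneg (neg_nonpos.2 hnum) h2s
  nlinarith [Real.rpow_nonneg (show (0:ℝ) ≤ 2 * π * s ^ 2 by positivity) (-(d:ℝ) / 2), h1,
    Real.exp_pos (-(∑ i, (z i) ^ 2) / (2 * s ^ 2))]

lemma gd_continuous (d : ℕ) (s : ℝ) : Continuous (gd d s) := by
  unfold gd
  fun_prop

lemma gd_prod {d : ℕ} {s : ℝ} (hs : 0 < s) (z : Fin d → ℝ) :
    gd d s z = ∏ i, g1 s (z i) := by
  unfold gd g1
  have hpos : (0:ℝ) < 2 * π * s ^ 2 := by positivity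
  rw [Finset.prod_mul_distrib, Finset.prod_const, ← Real.exp_sum, Finset.card_univ,
    Fintype.card_fin, ← Real.rpow_natCast ((2 * π * s ^ 2) ^ (-(1:ℝ) / 2)) d,
    ← Real.rpow_mul hpos.le]
  congr 1
  · congr 1; ring
  · congr 1
    rw [neg_div, Finset.sum_div, ← Finset.sum_neg_distrib]
    exact Finset.sum_congr rfl fun i _ => (neg_div _ _).symm

lemma gd_integrable {d : ℕ} {s : ℝ} (hs : 0 < s) : Integrable (gd d s) := by
  have h : gd d s = fun z : Fin d → ℝ => ∏ i, g1 s (z i) := funext fun z => gd_prod hs z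
  rw [h]
  exact Integrable.fintype_prod (𝕜 := ℝ) fun i => g1_integrable hs

lemma gd_integral {d : ℕ} {s : ℝ} (hs : 0 < s) : ∫ z, gd d s z = 1 := by
  have h : gd d s = fun z : Fin d → ℝ => ∏ i, g1 s (z i) := funext fun z => gd_prod hs z
  rw [h, integral_fintype_prod_volume_eq_prod (𝕜 := ℝ) (f := fun _ : Fin d => g1 s)]
  simp [g1_integral_s19 hs]

lemma gd_pt_decomp {d : ℕ} {s : ℝ} (hs : 0 < s) (z : Fin d → ℝ) :
    (∑ i, (z i) ^ 2) * gd d s z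
      = ∑ i, ∏ j, (if j = i then (fun u : ℝ => u ^ 2 * g1 s u) else g1 s) (z j) := by
  rw [gd_prod hs, Finset.sum_mul]
  refine Finset.sum_congr rfl fun i _ => ?_
  rw [← Finset.mul_prod_erase Finset.univ (fun j => g1 s (z j)) (Finset.mem_univ i),
    ← Finset.mul_prod_erase Finset.univ
      (fun j => (if j = i then (fun u : ℝ => u ^ 2 * g1 s u) else g1 s) (z j))
      (Finset.mem_univ i)]
  simp only [if_pos rfl]
  rw [← mul_assoc]
  congr 1
  refine Finset.prod_congr rfl fun j hj => ?_
  rw [if_neg (Finset.ne_of_mem_erase hj)]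

lemma gd_sq_integrable {d : ℕ} {s : ℝ} (hs : 0 < s) :
    Integrable (fun z : Fin d → ℝ => (∑ i, (z i) ^ 2) * gd d s z) := by
  have h : (fun z : Fin d → ℝ => (∑ i, (z i) ^ 2) * gd d s z)
      = fun z : Fin d → ℝ =>
        ∑ i, ∏ j, (if j = i then (fun u : ℝ => u ^ 2 * g1 s u) else g1 s) (z j) :=
    funext fun z => gd_pt_decomp hs z
  rw [h]
  refine integrable_finset_sum _ fun i _ => ?_
  refine Integrable.fintype_prod (𝕜 := ℝ) fun j => ?_
  by_cases hj : j = i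
  · rw [if_pos hj]; exact g1_sq_integrable hs
  · rw [if_neg hj]; exact g1_integrable hs

lemma gd_sq_integral {d : ℕ} {s : ℝ} (hs : 0 < s) :
    ∫ z : Fin d → ℝ, (∑ i, (z i) ^ 2) * gd d s z = d * s ^ 2 := by
  have h : (fun z : Fin d → ℝ => (∑ i, (z i) ^ 2) * gd d s z)
      = fun z : Fin d → ℝ =>
        ∑ i, ∏ j, (if j = i then (fun u : ℝ => u ^ 2 * g1 s u) else g1 s) (z j) :=
    funext fun z => gd_pt_decomp hs z
  rw [h, integral_finset_sum (μ := volume) _ (fun i _ => Integrable.fintype_prod (𝕜 := ℝ) fun j => by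
    by_cases hj : j = i
    · rw [if_pos hj]; exact g1_sq_integrable hs
    · rw [if_neg hj]; exact g1_integrable hs)]
  have hterm : ∀ i : Fin d,
      (∫ z : Fin d → ℝ, ∏ j, (if j = i then (fun u : ℝ => u ^ 2 * g1 s u) else g1 s) (z j))
        = s ^ 2 := by
    intro i
    rw [integral_fintype_prod_volume_eq_prod (𝕜 := ℝ)
      (f := fun j => (if j = i then (fun u : ℝ => u ^ 2 * g1 s u) else g1 s))]
    have : ∀ j : Fin d,
        (∫ u, (if j = i then (fun u : ℝ => u ^ 2 * g1 s u) else g1 s) u)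
          = if j = i then s ^ 2 else 1 := by
      intro j
      by_cases hj : j = i
      · rw [if_pos hj, if_pos hj]; exact g1_sq_integral hs
      · rw [if_neg hj, if_neg hj]; exact g1_integral_s19 hs
    rw [Finset.prod_congr rfl fun j _ => this j]
    simp
  rw [Finset.sum_congr rfl fun i _ => hterm i]
  simp [mul_comm]


set_option maxHeartbeats 2000000 in
/-- A coupling of `p_0` and `p_T` with transport cost at most
`((1 − m_T) + σ_T)√d`; consequently `W₁(p_0, p_T) ≤ C√T` for `0 < T ≤ 1`, with
`C = C(d, β̄)`. -/
theorem statement19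
    (d : ℕ) (hd : 1 ≤ d)
    (βlo βhi : ℝ) (hβlo : 0 < βlo) (hβhi : βlo ≤ βhi)
    (β : ℝ → ℝ) (hβc : ContinuousOn β (Set.Ici 0))
    (hβb : ∀ t : ℝ, 0 ≤ t → βlo ≤ β t ∧ β t ≤ βhi)
    (m σ : ℝ → ℝ)
    (hm : ∀ t : ℝ, m t = Real.exp (-(∫ s in (0:ℝ)..t, β s)))
    (hσ : ∀ t : ℝ, σ t = Real.sqrt (1 - (m t) ^ 2))
    (Cf : ℝ) (hCf : 1 ≤ Cf)
    (p0 : (Fin d → ℝ) → ℝ) (hp0meas : Measurable p0)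
    (hp0nn : ∀ x, 0 ≤ p0 x) (hp0int : (∫ x, p0 x) = 1)
    (hp0supp : ∀ x : Fin d → ℝ, ¬ (∀ i, |x i| ≤ 1) → p0 x = 0)
    (hp0bd : ∀ x : Fin d → ℝ, (∀ i, |x i| ≤ 1) → Cf⁻¹ ≤ p0 x ∧ p0 x ≤ Cf)
    (p : ℝ → (Fin d → ℝ) → ℝ)
    (hp : ∀ t : ℝ, ∀ x : Fin d → ℝ, p t x =
      ∫ y : Fin d → ℝ, p0 y * ((2 * Real.pi * (σ t) ^ 2) ^ (-(d : ℝ) / 2) *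
        Real.exp (-(∑ i, (x i - m t * y i) ^ 2) / (2 * (σ t) ^ 2)))) :
    (∀ T : ℝ, 0 < T →
      ∃ γ : Measure ((Fin d → ℝ) × (Fin d → ℝ)), IsProbabilityMeasure γ ∧
        γ.map Prod.fst = volume.withDensity (fun x => ENNReal.ofReal (p0 x)) ∧
        γ.map Prod.snd = volume.withDensity (fun x => ENNReal.ofReal (p T x)) ∧
        (∫ z : (Fin d → ℝ) × (Fin d → ℝ),
            Real.sqrt (∑ i, (z.1 i - z.2 i) ^ 2) ∂γ) ≤
          ((1 - m T) + σ T) * Real.sqrt d) ∧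
    (∃ C : ℝ, 0 < C ∧ ∀ T : ℝ, 0 < T → T ≤ 1 →
      ∃ γ : Measure ((Fin d → ℝ) × (Fin d → ℝ)), IsProbabilityMeasure γ ∧
        γ.map Prod.fst = volume.withDensity (fun x => ENNReal.ofReal (p0 x)) ∧
        γ.map Prod.snd = volume.withDensity (fun x => ENNReal.ofReal (p T x)) ∧
        (∫ z : (Fin d → ℝ) × (Fin d → ℝ),
            Real.sqrt (∑ i, (z.1 i - z.2 i) ^ 2) ∂γ) ≤ C * Real.sqrt T) := by
  have hp0integrable : Integrable p0 := by
    refine integrable_of_cube_support hp0meas Cf (fun x => ?_) hp0supp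
    rw [abs_of_nonneg (hp0nn x)]
    by_cases hx : ∀ i, |x i| ≤ 1
    · exact (hp0bd x hx).2
    · rw [hp0supp x hx]; linarith
  have hp0lint : ∫⁻ x, ENNReal.ofReal (p0 x) = 1 := by
    rw [← ofReal_integral_eq_lintegral_ofReal hp0integrable (Eventually.of_forall hp0nn),
      hp0int, ENNReal.ofReal_one]
  -- Main construction
  have main : ∀ T : ℝ, 0 < T →
      ∃ γ : Measure ((Fin d → ℝ) × (Fin d → ℝ)), IsProbabilityMeasure γ ∧
        γ.map Prod.fst = volume.withDensity (fun x => ENNReal.ofReal (p0 x)) ∧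
        γ.map Prod.snd = volume.withDensity (fun x => ENNReal.ofReal (p T x)) ∧
        (∫ z : (Fin d → ℝ) × (Fin d → ℝ),
            Real.sqrt (∑ i, (z.1 i - z.2 i) ^ 2) ∂γ) ≤
          ((1 - m T) + σ T) * Real.sqrt d := by
    intro T hT
    have hβint : IntervalIntegrable β volume 0 T := by
      apply ContinuousOn.intervalIntegrable
      apply hβc.mono
      rw [Set.uIcc_of_le hT.le]
      exact fun x hx => hx.1
    have hIlb : βlo * T ≤ ∫ u in (0:ℝ)..T, β u := by
      have h := intervalIntegral.integral_mono_on hT.le (intervalIntegrable_const (c := βlo))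
        hβint (fun x hx => (hβb x hx.1).1)
      rw [intervalIntegral.integral_const, smul_eq_mul] at h
      linarith [h]
    have hIpos : 0 < ∫ u in (0:ℝ)..T, β u := lt_of_lt_of_le (by positivity) hIlb
    have ha0 : 0 < m T := by rw [hm]; exact Real.exp_pos _
    have ha1 : m T < 1 := by rw [hm]; rw [Real.exp_lt_one_iff]; linarith
    have hs2 : (σ T) ^ 2 = 1 - (m T) ^ 2 := by
      rw [hσ]; exact Real.sq_sqrt (by nlinarith)
    have hs0 : 0 < σ T := by
      rw [hσ]; exact Real.sqrt_pos.2 (by nlinarith)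
    set a : ℝ := m T with hadef
    set s : ℝ := σ T with hsdef
    set F : (Fin d → ℝ) × (Fin d → ℝ) → ℝ :=
      fun w => p0 w.1 * gd d s (fun i => w.2 i - a * w.1 i) with hFdef
    have hFnn : ∀ w, 0 ≤ F w := fun w => mul_nonneg (hp0nn _) (gd_nonneg _ _ _)
    have hsubmeas : Measurable fun w : (Fin d → ℝ) × (Fin d → ℝ) =>
        (fun i => w.2 i - a * w.1 i) := by
      refine measurable_pi_lambda _ fun i => ?_
      exact ((measurable_pi_apply i).comp measurable_snd).sub
        (by fun_prop)
    have hFmeas : Measurable F :=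
      (hp0meas.comp measurable_fst).mul ((gd_continuous d s).measurable.comp hsubmeas)
    have htrans : ∀ (c : Fin d → ℝ) (H : (Fin d → ℝ) → ENNReal),
        ∫⁻ y, H (y - c) = ∫⁻ y, H y := by
      intro c H
      simp_rw [sub_eq_add_neg]
      exact lintegral_add_right_eq_self H (-c)
    have hgdlint : ∫⁻ z : Fin d → ℝ, ENNReal.ofReal (gd d s z) = 1 := by
      rw [← ofReal_integral_eq_lintegral_ofReal (gd_integrable hs0)
        (Eventually.of_forall (gd_nonneg d s)), gd_integral hs0, ENNReal.ofReal_one]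
    have hgdmeas : Measurable fun z : Fin d → ℝ => ENNReal.ofReal (gd d s z) :=
      (gd_continuous d s).measurable.ennreal_ofReal
    have keyInner : ∀ x : Fin d → ℝ,
        ∫⁻ y, ENNReal.ofReal (F (x, y)) = ENNReal.ofReal (p0 x) := by
      intro x
      simp only [hFdef]
      simp_rw [ENNReal.ofReal_mul (hp0nn x)]
      rw [lintegral_const_mul _ (by
        exact (gd_continuous d s).measurable.ennreal_ofReal.comp
          (measurable_pi_lambda _ fun i =>
            (measurable_pi_apply i).sub measurable_const))]
      have heq : (fun y : Fin d → ℝ => ENNReal.ofReal (gd d s (fun i => y i - a * x i)))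
          = fun y => (fun z => ENNReal.ofReal (gd d s z)) (y - (fun i => a * x i)) := rfl
      rw [heq, htrans (fun i => a * x i) (fun z => ENNReal.ofReal (gd d s z)), hgdlint, mul_one]
    set γ : Measure ((Fin d → ℝ) × (Fin d → ℝ)) :=
      ((volume : Measure (Fin d → ℝ)).prod volume).withDensity
        (fun w => ENNReal.ofReal (F w)) with hγdef
    have hmass : ∫⁻ w, ENNReal.ofReal (F w)
        ∂((volume : Measure (Fin d → ℝ)).prod volume) = 1 := by
      rw [lintegral_prod _ hFmeas.ennreal_ofReal.aemeasurable]
      rw [lintegral_congr keyInner, hp0lint]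
    have hprob : IsProbabilityMeasure γ := by
      constructor
      rw [hγdef, withDensity_apply _ MeasurableSet.univ, Measure.restrict_univ]
      exact hmass
    have hfst : γ.map Prod.fst = volume.withDensity (fun x => ENNReal.ofReal (p0 x)) := by
      refine Measure.ext fun t ht => ?_
      have hre := (Measure.prod_restrict (μ := (volume : Measure (Fin d → ℝ)))
        (ν := (volume : Measure (Fin d → ℝ))) t Set.univ).symm
      rw [Measure.restrict_univ] at hre
      rw [Measure.map_apply measurable_fst ht, withDensity_apply _ ht,
        hγdef, withDensity_apply _ (measurable_fst ht), ← Set.prod_univ, hre,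
        lintegral_prod _ hFmeas.ennreal_ofReal.aemeasurable]
      exact lintegral_congr keyInner
    have hFy : ∀ y : Fin d → ℝ,
        Integrable (fun x => p0 x * gd d s (fun i => y i - a * x i)) := by
      intro y
      refine integrable_of_cube_support
        (hp0meas.mul ((gd_continuous d s).measurable.comp
          (measurable_pi_lambda _ fun i =>
            measurable_const.sub (by fun_prop))))
        (Cf * (2 * π * s ^ 2) ^ (-(d:ℝ) / 2)) (fun x => ?_) (fun x hx => by
          rw [hp0supp x hx, zero_mul])
      rw [abs_of_nonneg (mul_nonneg (hp0nn x) (gd_nonneg _ _ _))]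
      by_cases hx : ∀ i, |x i| ≤ 1
      · exact mul_le_mul (hp0bd x hx).2 (gd_le _ _ _) (gd_nonneg _ _ _) (by linarith)
      · rw [hp0supp x hx, zero_mul]; positivity
    have keyInner2 : ∀ y : Fin d → ℝ,
        ∫⁻ x, ENNReal.ofReal (F (x, y)) = ENNReal.ofReal (p T y) := by
      intro y
      simp only [hFdef]
      rw [← ofReal_integral_eq_lintegral_ofReal (hFy y)
        (Eventually.of_forall fun x => mul_nonneg (hp0nn x) (gd_nonneg _ _ _))]
      congr 1
      rw [hp T y]
      rfl
    have hsnd : γ.map Prod.snd = volume.withDensity (fun x => ENNReal.ofReal (p T x)) := by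
      refine Measure.ext fun t ht => ?_
      have hre := (Measure.prod_restrict (μ := (volume : Measure (Fin d → ℝ)))
        (ν := (volume : Measure (Fin d → ℝ))) Set.univ t).symm
      rw [Measure.restrict_univ] at hre
      rw [Measure.map_apply measurable_snd ht, withDensity_apply _ ht,
        hγdef, withDensity_apply _ (measurable_snd ht), ← Set.univ_prod, hre,
        lintegral_prod_symm _ hFmeas.ennreal_ofReal.aemeasurable]
      exact lintegral_congr keyInner2
    refine ⟨γ, hprob, hfst, hsnd, ?_⟩
    have hcostcont : Continuous fun w : (Fin d → ℝ) × (Fin d → ℝ) =>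
        Real.sqrt (∑ i, (w.1 i - w.2 i) ^ 2) := by fun_prop
    have hsqmeas : Measurable fun z : Fin d → ℝ => (∑ i, (z i) ^ 2) :=
      Finset.measurable_sum _ fun i _ => (measurable_pi_apply i).pow_const 2
    have hBmeas : Measurable fun w : (Fin d → ℝ) × (Fin d → ℝ) =>
        ENNReal.ofReal (Real.sqrt (∑ i, (w.2 i - a * w.1 i) ^ 2)) := by
      apply Measurable.ennreal_ofReal
      exact continuous_sqrt.measurable.comp
        (Finset.measurable_sum _ fun i _ =>
          by fun_prop)
    have hptwise : ∀ w : (Fin d → ℝ) × (Fin d → ℝ),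
        ENNReal.ofReal (F w) * ENNReal.ofReal (Real.sqrt (∑ i, (w.1 i - w.2 i) ^ 2))
          ≤ ENNReal.ofReal (F w) * (ENNReal.ofReal ((1 - a) * Real.sqrt d)
              + ENNReal.ofReal (Real.sqrt (∑ i, (w.2 i - a * w.1 i) ^ 2))) := by
      intro w
      by_cases hx : ∀ i, |w.1 i| ≤ 1
      · rw [← ENNReal.ofReal_add (mul_nonneg (by linarith) (Real.sqrt_nonneg _))
          (Real.sqrt_nonneg _)]
        refine mul_le_mul_right (ENNReal.ofReal_le_ofReal ?_) _
        have h2 : Real.sqrt (∑ i, (w.1 i - w.2 i) ^ 2)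
            = Real.sqrt (∑ i, ((1 - a) * w.1 i + (-(w.2 i - a * w.1 i))) ^ 2) := by
          congr 1; exact Finset.sum_congr rfl fun i _ => by ring_nf
        rw [h2]
        refine le_trans (sqrt_sum_sq_add_le _ _) ?_
        have h3 : Real.sqrt (∑ i, ((1 - a) * w.1 i) ^ 2) ≤ (1 - a) * Real.sqrt d := by
          have e : ∑ i, ((1 - a) * w.1 i) ^ 2 = (1 - a) ^ 2 * ∑ i, (w.1 i) ^ 2 := by
            rw [Finset.mul_sum]; exact Finset.sum_congr rfl fun i _ => by ring
          rw [e, Real.sqrt_mul (sq_nonneg _), Real.sqrt_sq (by linarith : (0:ℝ) ≤ 1 - a)]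
          refine mul_le_mul_of_nonneg_left (Real.sqrt_le_sqrt ?_) (by linarith)
          calc ∑ i, (w.1 i) ^ 2 ≤ ∑ _i : Fin d, (1:ℝ) := Finset.sum_le_sum fun i _ => by
                have := abs_le.1 (hx i); nlinarith [this.1, this.2]
            _ = d := by simp
        have h4 : Real.sqrt (∑ i, (-(w.2 i - a * w.1 i)) ^ 2)
            = Real.sqrt (∑ i, (w.2 i - a * w.1 i) ^ 2) := by
          congr 1; exact Finset.sum_congr rfl fun i _ => by ring
        rw [h4]
        linarith [h3]
      · have hF0 : F w = 0 := by
          simp only [hFdef]; rw [hp0supp _ hx, zero_mul]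
        rw [hF0]
        simp
    set Jb : ENNReal := ∫⁻ z : Fin d → ℝ,
        ENNReal.ofReal (gd d s z) * ENNReal.ofReal (Real.sqrt (∑ i, (z i) ^ 2)) with hJbdef
    have hJb : Jb ≤ ENNReal.ofReal (Real.sqrt d * s) := by
      set f : (Fin d → ℝ) → ENNReal := fun z =>
        ENNReal.ofReal (Real.sqrt (∑ i, (z i) ^ 2) * Real.sqrt (gd d s z)) with hfdef2
      set g : (Fin d → ℝ) → ENNReal := fun z =>
        ENNReal.ofReal (Real.sqrt (gd d s z)) with hgdef2
      have hfg : ∀ z, ENNReal.ofReal (gd d s z)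
          * ENNReal.ofReal (Real.sqrt (∑ i, (z i) ^ 2)) = (f * g) z := by
        intro z
        simp only [hfdef2, hgdef2, Pi.mul_apply]
        rw [← ENNReal.ofReal_mul (gd_nonneg d s z),
          ← ENNReal.ofReal_mul (mul_nonneg (Real.sqrt_nonneg _) (Real.sqrt_nonneg _))]
        congr 1
        rw [mul_assoc, Real.mul_self_sqrt (gd_nonneg d s z)]
        ring
      have hfmeas : Measurable f := by
        apply Measurable.ennreal_ofReal
        exact (continuous_sqrt.measurable.comp hsqmeas).mul
          (continuous_sqrt.measurable.comp (gd_continuous d s).measurable)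
      have hgmeas : Measurable g :=
        Measurable.ennreal_ofReal
          (continuous_sqrt.measurable.comp (gd_continuous d s).measurable)
      have hconj : Real.HolderConjugate 2 2 := Real.HolderConjugate.two_two
      have hH := ENNReal.lintegral_mul_le_Lp_mul_Lq volume hconj
        hfmeas.aemeasurable hgmeas.aemeasurable
      have hf2 : ∀ z, f z ^ (2:ℝ) = ENNReal.ofReal ((∑ i, (z i) ^ 2) * gd d s z) := by
        intro z
        simp only [hfdef2]
        rw [ENNReal.ofReal_rpow_of_nonneg
          (mul_nonneg (Real.sqrt_nonneg _) (Real.sqrt_nonneg _)) (by norm_num)]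
        congr 1
        rw [show ((2:ℝ) = ((2:ℕ):ℝ)) by norm_num, Real.rpow_natCast, mul_pow,
          Real.sq_sqrt (Finset.sum_nonneg fun i _ => sq_nonneg _),
          Real.sq_sqrt (gd_nonneg d s z)]
      have hg2 : ∀ z, g z ^ (2:ℝ) = ENNReal.ofReal (gd d s z) := by
        intro z
        simp only [hgdef2]
        rw [ENNReal.ofReal_rpow_of_nonneg (Real.sqrt_nonneg _) (by norm_num)]
        congr 1
        rw [show ((2:ℝ) = ((2:ℕ):ℝ)) by norm_num, Real.rpow_natCast,
          Real.sq_sqrt (gd_nonneg d s z)]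
      have hf2int : ∫⁻ z, f z ^ (2:ℝ) = ENNReal.ofReal ((d:ℝ) * s ^ 2) := by
        rw [lintegral_congr hf2,
          ← ofReal_integral_eq_lintegral_ofReal (gd_sq_integrable hs0)
            (Eventually.of_forall fun z =>
              mul_nonneg (Finset.sum_nonneg fun i _ => sq_nonneg _) (gd_nonneg d s z)),
          gd_sq_integral hs0]
      have hg2int : ∫⁻ z, g z ^ (2:ℝ) = 1 := by
        rw [lintegral_congr hg2, hgdlint]
      calc Jb = ∫⁻ z, (f * g) z := lintegral_congr hfg
        _ ≤ (∫⁻ z, f z ^ (2:ℝ)) ^ ((1:ℝ)/2) * (∫⁻ z, g z ^ (2:ℝ)) ^ ((1:ℝ)/2) := by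
            simpa using hH
        _ = (ENNReal.ofReal ((d:ℝ) * s ^ 2)) ^ ((1:ℝ)/2) := by
            rw [hf2int, hg2int, ENNReal.one_rpow, mul_one]
        _ = ENNReal.ofReal (Real.sqrt d * s) := by
            rw [ENNReal.ofReal_rpow_of_nonneg (by positivity) (by norm_num)]
            congr 1
            rw [← Real.sqrt_eq_rpow, Real.sqrt_mul (Nat.cast_nonneg d), Real.sqrt_sq hs0.le]
    have hterm2 : (∫⁻ w : (Fin d → ℝ) × (Fin d → ℝ), ENNReal.ofReal (F w)
        * ENNReal.ofReal (Real.sqrt (∑ i, (w.2 i - a * w.1 i) ^ 2))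
        ∂((volume : Measure (Fin d → ℝ)).prod volume)) ≤ ENNReal.ofReal (Real.sqrt d * s) := by
      rw [lintegral_prod (fun w => ENNReal.ofReal (F w)
          * ENNReal.ofReal (Real.sqrt (∑ i, (w.2 i - a * w.1 i) ^ 2)))
        ((hFmeas.ennreal_ofReal.mul hBmeas).aemeasurable)]
      have hin : ∀ x : Fin d → ℝ, (∫⁻ y, ENNReal.ofReal (F (x, y))
          * ENNReal.ofReal (Real.sqrt (∑ i, (y i - a * x i) ^ 2)))
          = ENNReal.ofReal (p0 x) * Jb := by
        intro x
        simp only [hFdef]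
        simp_rw [ENNReal.ofReal_mul (hp0nn x), mul_assoc]
        rw [lintegral_const_mul _ (by
          exact ((gd_continuous d s).measurable.ennreal_ofReal.comp
            (measurable_pi_lambda _ fun i =>
              (measurable_pi_apply i).sub measurable_const)).mul
            (Measurable.ennreal_ofReal (continuous_sqrt.measurable.comp
              (Finset.measurable_sum _ fun i _ =>
                ((measurable_pi_apply i).sub measurable_const).pow_const 2))))]
        congr 1
        have heq2 : (fun y : Fin d → ℝ => ENNReal.ofReal (gd d s (fun i => y i - a * x i))
            * ENNReal.ofReal (Real.sqrt (∑ i, (y i - a * x i) ^ 2)))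
            = fun y => (fun z => ENNReal.ofReal (gd d s z)
                * ENNReal.ofReal (Real.sqrt (∑ i, (z i) ^ 2))) (y - (fun i => a * x i)) := rfl
        rw [heq2, htrans (fun i => a * x i)
          (fun z => ENNReal.ofReal (gd d s z) * ENNReal.ofReal (Real.sqrt (∑ i, (z i) ^ 2)))]
      rw [lintegral_congr hin, lintegral_mul_const _ hp0meas.ennreal_ofReal, hp0lint, one_mul]
      exact hJb
    have hfinal : (∫⁻ w : (Fin d → ℝ) × (Fin d → ℝ), ENNReal.ofReal (F w)
        * ENNReal.ofReal (Real.sqrt (∑ i, (w.1 i - w.2 i) ^ 2))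
        ∂((volume : Measure (Fin d → ℝ)).prod volume))
        ≤ ENNReal.ofReal (((1 - a) + s) * Real.sqrt d) := by
      calc (∫⁻ w : (Fin d → ℝ) × (Fin d → ℝ), ENNReal.ofReal (F w)
          * ENNReal.ofReal (Real.sqrt (∑ i, (w.1 i - w.2 i) ^ 2))
          ∂((volume : Measure (Fin d → ℝ)).prod volume))
          ≤ ∫⁻ w : (Fin d → ℝ) × (Fin d → ℝ), ENNReal.ofReal (F w)
            * (ENNReal.ofReal ((1 - a) * Real.sqrt d)
              + ENNReal.ofReal (Real.sqrt (∑ i, (w.2 i - a * w.1 i) ^ 2)))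
            ∂((volume : Measure (Fin d → ℝ)).prod volume) := lintegral_mono hptwise
        _ = ∫⁻ w : (Fin d → ℝ) × (Fin d → ℝ),
            (ENNReal.ofReal (F w) * ENNReal.ofReal ((1 - a) * Real.sqrt d)
              + ENNReal.ofReal (F w)
                * ENNReal.ofReal (Real.sqrt (∑ i, (w.2 i - a * w.1 i) ^ 2)))
            ∂((volume : Measure (Fin d → ℝ)).prod volume) :=
            lintegral_congr fun w => mul_add _ _ _
        _ = (∫⁻ w : (Fin d → ℝ) × (Fin d → ℝ),
              ENNReal.ofReal (F w) * ENNReal.ofReal ((1 - a) * Real.sqrt d)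
              ∂((volume : Measure (Fin d → ℝ)).prod volume))
            + ∫⁻ w : (Fin d → ℝ) × (Fin d → ℝ), ENNReal.ofReal (F w)
              * ENNReal.ofReal (Real.sqrt (∑ i, (w.2 i - a * w.1 i) ^ 2))
              ∂((volume : Measure (Fin d → ℝ)).prod volume) :=
            lintegral_add_left (hFmeas.ennreal_ofReal.mul measurable_const) _
        _ ≤ ENNReal.ofReal ((1 - a) * Real.sqrt d) + ENNReal.ofReal (Real.sqrt d * s) := by
            refine add_le_add (le_of_eq ?_) hterm2
            rw [lintegral_mul_const _ hFmeas.ennreal_ofReal, hmass, one_mul]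
        _ = ENNReal.ofReal (((1 - a) + s) * Real.sqrt d) := by
            rw [← ENNReal.ofReal_add (mul_nonneg (by linarith) (Real.sqrt_nonneg _))
              (mul_nonneg (Real.sqrt_nonneg _) hs0.le)]
            congr 1
            ring
    rw [integral_eq_lintegral_of_nonneg_ae
      (Eventually.of_forall fun w => Real.sqrt_nonneg _) hcostcont.aestronglyMeasurable]
    refine ENNReal.toReal_le_of_le_ofReal
      (mul_nonneg (add_nonneg (by linarith) hs0.le) (Real.sqrt_nonneg _)) ?_
    rw [hγdef, lintegral_withDensity_eq_lintegral_mul _ hFmeas.ennreal_ofReal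
      hcostcont.measurable.ennreal_ofReal]
    exact hfinal
  refine ⟨main, ?_⟩
  have hβhi0 : 0 < βhi := lt_of_lt_of_le hβlo hβhi
  have hd0 : (0:ℝ) < (d:ℝ) := by exact_mod_cast Nat.lt_of_lt_of_le Nat.zero_lt_one hd
  refine ⟨(βhi + Real.sqrt (2 * βhi)) * Real.sqrt d, ?_, ?_⟩
  · exact mul_pos (add_pos hβhi0 (Real.sqrt_pos.2 (by positivity))) (Real.sqrt_pos.2 hd0)
  intro T hT hT1
  obtain ⟨γ, h1, h2, h3, h4⟩ := main T hT
  refine ⟨γ, h1, h2, h3, h4.trans ?_⟩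
  have hβint : IntervalIntegrable β volume 0 T := by
    apply ContinuousOn.intervalIntegrable
    apply hβc.mono
    rw [Set.uIcc_of_le hT.le]
    exact fun x hx => hx.1
  have hIub : (∫ u in (0:ℝ)..T, β u) ≤ βhi * T := by
    have h := intervalIntegral.integral_mono_on hT.le hβint
      (intervalIntegrable_const (c := βhi)) (fun x hx => (hβb x hx.1).2)
    rw [intervalIntegral.integral_const, smul_eq_mul] at h
    linarith [h]
  have hIlb : βlo * T ≤ ∫ u in (0:ℝ)..T, β u := by
    have h := intervalIntegral.integral_mono_on hT.le (intervalIntegrable_const (c := βlo))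
      hβint (fun x hx => (hβb x hx.1).1)
    rw [intervalIntegral.integral_const, smul_eq_mul] at h
    linarith [h]
  have hm0 : 0 < m T := by rw [hm]; exact Real.exp_pos _
  have hm1 : m T ≤ 1 := by
    rw [hm, Real.exp_le_one_iff]
    nlinarith
  have h1m : 1 - m T ≤ βhi * T := by
    have hExp : 1 - m T ≤ ∫ u in (0:ℝ)..T, β u := by
      rw [hm]
      have := Real.add_one_le_exp (-(∫ u in (0:ℝ)..T, β u))
      linarith
    linarith
  have hσle : σ T ≤ Real.sqrt (2 * βhi) * Real.sqrt T := by
    rw [hσ, ← Real.sqrt_mul (by positivity) T]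
    refine Real.sqrt_le_sqrt ?_
    nlinarith [h1m, hm0, hm1]
  have hTsq : T ≤ Real.sqrt T := by
    nlinarith [Real.sq_sqrt hT.le, Real.sqrt_nonneg T, Real.sqrt_le_one.2 hT1]
  have hb : (1 - m T) + σ T ≤ (βhi + Real.sqrt (2 * βhi)) * Real.sqrt T := by
    have h5 : βhi * T ≤ βhi * Real.sqrt T := mul_le_mul_of_nonneg_left hTsq hβhi0.le
    have h6 : 1 - m T ≤ βhi * Real.sqrt T := le_trans h1m h5
    nlinarith [hσle]
  calc ((1 - m T) + σ T) * Real.sqrt d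
      ≤ ((βhi + Real.sqrt (2 * βhi)) * Real.sqrt T) * Real.sqrt d :=
        mul_le_mul_of_nonneg_right hb (Real.sqrt_nonneg _)
    _ = (βhi + Real.sqrt (2 * βhi)) * Real.sqrt d * Real.sqrt T := by ring
end
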